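/- arXiv:2003.01713 — 8 statements merged into one kernel-verified Lean document; each statement's English description precedes it below -/
import Mathlib

section
/- Let ⟨z,w⟩ = i(conj(z¹)w³ − conj(z³)w¹) + conj(z²)w², a pseudo-Hermitian inner product on ℂ³ with matrix h. Suppose Γ : I → ℂ³ is a smooth curve with ⟨Γ(t),Γ(t)⟩ = 0 and ⟨Γ(t),Γ'(t)⟩ = 0 for all t (Legendrian lift), and det(Γ(t),Γ'(t),Γ''(t)) = i for all t (normalization). Then for all t: ⟨Γ,Γ⟩ = ⟨Γ,Γ'⟩ = ⟨Γ',Γ''⟩ = ⟨Γ,Γ'''⟩ = 0 and ⟨Γ',Γ'⟩ = −⟨Γ,Γ''⟩ = 1. -/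
open Complex

/-- The pseudo-Hermitian inner product ⟨z,w⟩ = i(conj z¹ w³ − conj z³ w¹) + conj z² w²,
conjugate-linear in the first argument. -/
noncomputable def herm (z w : Fin 3 → ℂ) : ℂ :=
  Complex.I * ((starRingEnd ℂ) (z 0) * w 2 - (starRingEnd ℂ) (z 2) * w 0) +
    (starRingEnd ℂ) (z 1) * w 1

/-- Determinant of the 3×3 matrix with columns a, b, c. -/
noncomputable def det3 (a b c : Fin 3 → ℂ) : ℂ :=
  Matrix.det !![a 0, b 0, c 0; a 1, b 1, c 1; a 2, b 2, c 2]

lemma detM (m00 m01 m02 m10 m11 m12 m20 m21 m22 : ℂ) :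
    Matrix.det !![m00, m01, m02; m10, m11, m12; m20, m21, m22]
      = m00 * m11 * m22 - m00 * m12 * m21 - m01 * m10 * m22 + m01 * m12 * m20
        + m02 * m10 * m21 - m02 * m11 * m20 := by
  rw [Matrix.det_fin_three]
  simp [Matrix.cons_val_zero, Matrix.cons_val_one, Matrix.head_cons]

lemma det3_explicit (a b c : Fin 3 → ℂ) :
    det3 a b c = a 0 * b 1 * c 2 - a 0 * b 2 * c 1 - b 0 * a 1 * c 2
      + b 0 * a 2 * c 1 + c 0 * a 1 * b 2 - c 0 * a 2 * b 1 := by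
  rw [det3, detM]; ring

lemma herm_conj (z w : Fin 3 → ℂ) : herm w z = (starRingEnd ℂ) (herm z w) := by
  simp [herm, map_add, map_mul, map_sub, Complex.conj_conj, Complex.conj_I]
  ring

set_option maxRecDepth 8000 in
lemma gram_det (a b c x y z : Fin 3 → ℂ) :
    Matrix.det !![herm a x, herm a y, herm a z;
                  herm b x, herm b y, herm b z;
                  herm c x, herm c y, herm c z]
      = -((starRingEnd ℂ) (det3 a b c)) * det3 x y z := by
  have h2 : Complex.I ^ 2 = -1 := Complex.I_sq
  have h3 : Complex.I ^ 3 = -Complex.I := by rw [pow_succ, h2]; ring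
  rw [detM]
  simp only [herm, det3_explicit, map_add, map_mul, map_sub, Complex.conj_I]
  ring_nf
  simp only [h2, h3]
  ring

lemma det3_rep1 (a b : Fin 3 → ℂ) : det3 a a b = 0 := by
  rw [det3_explicit]; ring

lemma det3_rep2 (a b : Fin 3 → ℂ) : det3 a b b = 0 := by
  rw [det3_explicit]; ring

lemma herm_hasDerivAt {f g : ℝ → Fin 3 → ℂ} {f' g' : Fin 3 → ℂ} {t : ℝ}
    (hf : HasDerivAt f f' t) (hg : HasDerivAt g g' t) :
    HasDerivAt (fun s => herm (f s) (g s)) (herm f' (g t) + herm (f t) g') t := by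
  have hfi : ∀ i, HasDerivAt (fun s => f s i) (f' i) t := hasDerivAt_pi.mp hf
  have hgi : ∀ i, HasDerivAt (fun s => g s i) (g' i) t := hasDerivAt_pi.mp hg
  have H := ((((hfi 0).star.mul (hgi 2)).sub ((hfi 2).star.mul (hgi 0))).const_mul
      Complex.I).add ((hfi 1).star.mul (hgi 1))
  convert H using 1
  · rfl
  · funext s; simp only [herm, starRingEnd_apply, Pi.add_apply, Pi.mul_apply, Pi.sub_apply]
  simp only [herm, starRingEnd_apply]
  ring

lemma det3_hasDerivAt {f g h : ℝ → Fin 3 → ℂ} {f' g' h' : Fin 3 → ℂ} {t : ℝ}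
    (hf : HasDerivAt f f' t) (hg : HasDerivAt g g' t) (hh : HasDerivAt h h' t) :
    HasDerivAt (fun s => det3 (f s) (g s) (h s))
      (det3 f' (g t) (h t) + det3 (f t) g' (h t) + det3 (f t) (g t) h') t := by
  have hfi : ∀ i, HasDerivAt (fun s => f s i) (f' i) t := hasDerivAt_pi.mp hf
  have hgi : ∀ i, HasDerivAt (fun s => g s i) (g' i) t := hasDerivAt_pi.mp hg
  have hhi : ∀ i, HasDerivAt (fun s => h s i) (h' i) t := hasDerivAt_pi.mp hh
  have T1 := (hfi 0).mul ((hgi 1).mul (hhi 2))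
  have T2 := (hfi 0).mul ((hgi 2).mul (hhi 1))
  have T3 := (hgi 0).mul ((hfi 1).mul (hhi 2))
  have T4 := (hgi 0).mul ((hfi 2).mul (hhi 1))
  have T5 := (hhi 0).mul ((hfi 1).mul (hgi 2))
  have T6 := (hhi 0).mul ((hfi 2).mul (hgi 1))
  have H := (((T1.sub T2).sub T3).add T4).add (T5.sub T6)
  have heq : (fun s => det3 (f s) (g s) (h s)) = (fun x =>
      f x 0 * (g x 1 * h x 2) - f x 0 * (g x 2 * h x 1) - g x 0 * (f x 1 * h x 2)
        + g x 0 * (f x 2 * h x 1) + (h x 0 * (f x 1 * g x 2) - h x 0 * (f x 2 * g x 1))) := by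
    funext s; rw [det3_explicit]; ring
  rw [heq]
  convert H using 1
  · rfl
  · rfl
  simp only [det3_explicit, Pi.mul_apply]; ring

theorem stmt0 (Γ : ℝ → (Fin 3 → ℂ)) (hΓ : ContDiff ℝ (⊤ : ℕ∞) Γ)
    (h00 : ∀ t, herm (Γ t) (Γ t) = 0)
    (h01 : ∀ t, herm (Γ t) (iteratedDeriv 1 Γ t) = 0)
    (hdet : ∀ t, det3 (Γ t) (iteratedDeriv 1 Γ t) (iteratedDeriv 2 Γ t) = Complex.I) :
    ∀ t, herm (iteratedDeriv 1 Γ t) (iteratedDeriv 2 Γ t) = 0 ∧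
      herm (Γ t) (iteratedDeriv 3 Γ t) = 0 ∧
      herm (iteratedDeriv 1 Γ t) (iteratedDeriv 1 Γ t) = 1 ∧
      herm (Γ t) (iteratedDeriv 2 Γ t) = -1 := by
  have hder : ∀ (n : ℕ) (t : ℝ),
      HasDerivAt (iteratedDeriv n Γ) (iteratedDeriv (n + 1) Γ t) t := by
    intro n t
    have h1 : DifferentiableAt ℝ (iteratedDeriv n Γ) t := by
      have := hΓ.differentiable_iteratedDeriv n (by exact_mod_cast lt_top_iff_ne_top.2 (by simp))
      exact this.differentiableAt
    rw [iteratedDeriv_succ]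
    exact h1.hasDerivAt
  have hder0 : ∀ t : ℝ, HasDerivAt Γ (iteratedDeriv 1 Γ t) t := by
    intro t; have := hder 0 t; rwa [iteratedDeriv_zero] at this
  have hconstD : ∀ {F : ℝ → ℂ} {D : ℂ} {c : ℂ} {t : ℝ},
      HasDerivAt F D t → (∀ s, F s = c) → D = 0 := by
    intro F D c t hF hc
    have : F = fun _ => c := funext hc
    rw [this] at hF
    exact hF.unique (hasDerivAt_const t c)
  set Γ₁ := iteratedDeriv 1 Γ with hΓ₁
  set Γ₂ := iteratedDeriv 2 Γ with hΓ₂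
  set Γ₃ := iteratedDeriv 3 Γ with hΓ₃
  have hd1 : ∀ t, HasDerivAt Γ₁ (Γ₂ t) t := hder 1
  have hd2 : ∀ t, HasDerivAt Γ₂ (Γ₃ t) t := hder 2
  have F1 : ∀ t, herm (Γ₁ t) (Γ t) = 0 := by
    intro t
    have h := hconstD (herm_hasDerivAt (hder0 t) (hder0 t)) h00
    have := h01 t
    linear_combination h - this
  have F2 : ∀ t, herm (Γ₁ t) (Γ₁ t) + herm (Γ t) (Γ₂ t) = 0 := by
    intro t
    exact hconstD (herm_hasDerivAt (hder0 t) (hd1 t)) h01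
  have F4 : ∀ t, herm (Γ₁ t) (Γ₁ t) = 1 ∧ herm (Γ t) (Γ₂ t) = -1 := by
    intro t
    have hg := gram_det (Γ t) (Γ₁ t) (Γ₂ t) (Γ t) (Γ₁ t) (Γ₂ t)
    rw [hdet t] at hg
    set A := herm (Γ t) (Γ₂ t) with hA
    set C := herm (Γ₁ t) (Γ₁ t) with hC
    have h20 : herm (Γ₂ t) (Γ t) = (starRingEnd ℂ) A := herm_conj _ _
    have hCr : C = (starRingEnd ℂ) C := herm_conj _ _
    have hAc : A = -C := by linear_combination F2 t
    have hkey : A * (starRingEnd ℂ) A * C = 1 := by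
      rw [detM, h00 t, h01 t, F1 t, h20, Complex.conj_I] at hg
      linear_combination -hg - Complex.I_sq
    have hC3 : C ^ 3 = 1 := by
      rw [hAc] at hkey
      have hc' : (starRingEnd ℂ) (-C) = -C := by rw [map_neg, ← hCr]
      rw [hc'] at hkey
      linear_combination hkey
    have hCim : C.im = 0 := by
      have := congrArg Complex.im hCr
      simp at this
      linarith
    have hCre : C.re = 1 := by
      have h3 : (C.re : ℂ) ^ 3 = 1 := by
        have hcc : C = (C.re : ℂ) := by
          apply Complex.ext <;> simp [hCim]
        rw [← hcc]; exact hC3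
      have h3' : C.re ^ 3 = 1 := by exact_mod_cast h3
      nlinarith [sq_nonneg (C.re - 1), sq_nonneg (C.re + 1), sq_nonneg C.re]
    have hC1 : C = 1 := by
      apply Complex.ext <;> simp [hCim, hCre]
    refine ⟨hC1, ?_⟩
    rw [hAc, hC1]
  have F6 : ∀ t, herm (Γ₁ t) (Γ₂ t) + herm (Γ t) (Γ₃ t) = 0 := by
    intro t
    exact hconstD (herm_hasDerivAt (hder0 t) (hd2 t)) (fun s => (F4 s).2)
  have F7 : ∀ t, det3 (Γ t) (Γ₁ t) (Γ₃ t) = 0 := by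
    intro t
    have h := hconstD (det3_hasDerivAt (hder0 t) (hd1 t) (hd2 t)) hdet
    rw [det3_rep1, det3_rep2] at h
    linear_combination h
  intro t
  have hX : herm (Γ t) (Γ₃ t) = 0 := by
    have hg := gram_det (Γ t) (Γ₁ t) (Γ₂ t) (Γ t) (Γ₁ t) (Γ₃ t)
    rw [hdet t, F7 t, detM] at hg
    have h20 : herm (Γ₂ t) (Γ t) = -1 := by
      rw [herm_conj, (F4 t).2]; simp
    rw [h00 t, h01 t, F1 t, (F4 t).1, h20] at hg
    linear_combination hg
  have hd12 : herm (Γ₁ t) (Γ₂ t) = 0 := by linear_combination F6 t - hX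
  exact ⟨hd12, hX, (F4 t).1, (F4 t).2⟩
end

section
/- Let Γ : I → ℂ³ be a normalized lift of a Legendrian curve (so ⟨Γ,Γ⟩ = ⟨Γ,Γ'⟩ = ⟨Γ',Γ''⟩ = 0, ⟨Γ',Γ'⟩ = −⟨Γ,Γ''⟩ = 1 and det(Γ,Γ',Γ'') = i), and let h : J → I be a smooth change of parameter with h' ≠ 0. Then Γ̃ := (1/h')·(Γ∘h) is a normalized lift of the reparameterized curve, i.e. det(Γ̃, Γ̃', Γ̃'') = i. -/
open Complex

theorem stmt1 (Γ : ℝ → (Fin 3 → ℂ)) (hΓ : ContDiff ℝ (⊤ : ℕ∞) Γ)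
    (h00 : ∀ t, herm (Γ t) (Γ t) = 0)
    (h01 : ∀ t, herm (Γ t) (iteratedDeriv 1 Γ t) = 0)
    (h12 : ∀ t, herm (iteratedDeriv 1 Γ t) (iteratedDeriv 2 Γ t) = 0)
    (h11 : ∀ t, herm (iteratedDeriv 1 Γ t) (iteratedDeriv 1 Γ t) = 1)
    (h02 : ∀ t, herm (Γ t) (iteratedDeriv 2 Γ t) = -1)
    (hdet : ∀ t, det3 (Γ t) (iteratedDeriv 1 Γ t) (iteratedDeriv 2 Γ t) = Complex.I)
    (h : ℝ → ℝ) (hh : ContDiff ℝ (⊤ : ℕ∞) h) (hh' : ∀ s, deriv h s ≠ 0) :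
    ∀ s, det3 ((fun u => (((deriv h u : ℝ) : ℂ))⁻¹ • Γ (h u)) s)
      (iteratedDeriv 1 (fun u => (((deriv h u : ℝ) : ℂ))⁻¹ • Γ (h u)) s)
      (iteratedDeriv 2 (fun u => (((deriv h u : ℝ) : ℂ))⁻¹ • Γ (h u)) s) = Complex.I := by
  intro s
  set g : ℝ → ℂ := fun u => (((deriv h u : ℝ) : ℂ))⁻¹ with hgdef
  set Γ₁ := iteratedDeriv 1 Γ with hΓ1def
  set Γ₂ := iteratedDeriv 2 Γ with hΓ2def
  -- smoothness facts
  have hΓ1c : ContDiff ℝ (⊤ : ℕ∞) Γ₁ := by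
    rw [hΓ1def, iteratedDeriv_one]
    exact (contDiff_infty_iff_deriv.mp hΓ).2
  have hdh : ContDiff ℝ (⊤ : ℕ∞) (deriv h) := (contDiff_infty_iff_deriv.mp hh).2
  have hG : ContDiff ℝ (⊤ : ℕ∞) (fun u => ((deriv h u : ℝ) : ℂ)) :=
    Complex.ofRealCLM.contDiff.comp hdh
  have hGne : ∀ u, ((deriv h u : ℝ) : ℂ) ≠ 0 := fun u => by
    exact_mod_cast Complex.ofReal_ne_zero.mpr (hh' u)
  have hgc : ContDiff ℝ (⊤ : ℕ∞) g := hG.inv hGne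
  have hgc' : ContDiff ℝ (⊤ : ℕ∞) (deriv g) := (contDiff_infty_iff_deriv.mp hgc).2
  -- derivative facts
  have hhd : ∀ u, HasDerivAt h (deriv h u) u :=
    fun u => (hh.differentiable (by simp) u).hasDerivAt
  have hΓd : ∀ t, HasDerivAt Γ (Γ₁ t) t := fun t => by
    rw [hΓ1def, iteratedDeriv_one]
    exact (hΓ.differentiable (by simp) t).hasDerivAt
  have hΓ1d : ∀ t, HasDerivAt Γ₁ (Γ₂ t) t := fun t => by
    rw [hΓ2def, show (2 : ℕ) = 1 + 1 from rfl, iteratedDeriv_succ, ← hΓ1def]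
    exact (hΓ1c.differentiable (by simp) t).hasDerivAt
  have hgd : ∀ u, HasDerivAt g (deriv g u) u :=
    fun u => (hgc.differentiable (by simp) u).hasDerivAt
  have hgd' : ∀ u, HasDerivAt (deriv g) (deriv (deriv g) u) u :=
    fun u => (hgc'.differentiable (by simp) u).hasDerivAt
  have hA : ∀ u, HasDerivAt (fun v => Γ (h v)) (deriv h u • Γ₁ (h u)) u :=
    fun u => (hΓd (h u)).scomp u (hhd u)
  have hgk : ∀ u, g u * ((deriv h u : ℝ) : ℂ) = 1 := fun u => inv_mul_cancel₀ (hGne u)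
  -- first derivative of F
  have esm : ∀ u, g u • (deriv h u • Γ₁ (h u)) = Γ₁ (h u) := by
    intro u
    funext i
    simp only [Pi.smul_apply, smul_eq_mul, Complex.real_smul]
    rw [← mul_assoc, hgk u, one_mul]
  have hF : ∀ u, HasDerivAt (fun v => g v • Γ (h v))
      (Γ₁ (h u) + deriv g u • Γ (h u)) u := by
    intro u
    have := (hgd u).smul (hA u)
    rwa [esm u] at this
  have hderivF : deriv (fun v => g v • Γ (h v)) = fun u => Γ₁ (h u) + deriv g u • Γ (h u) :=
    funext fun u => (hF u).deriv
  -- second derivative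
  have hF2 : HasDerivAt (fun u => Γ₁ (h u) + deriv g u • Γ (h u))
      (deriv h s • Γ₂ (h s)
        + (deriv g s • (deriv h s • Γ₁ (h s)) + deriv (deriv g) s • Γ (h s))) s :=
    ((hΓ1d (h s)).scomp s (hhd s)).add ((hgd' s).smul (hA s))
  have e1 : iteratedDeriv 1 (fun u => g u • Γ (h u)) s = Γ₁ (h s) + deriv g s • Γ (h s) := by
    rw [iteratedDeriv_one, hderivF]
  have e2 : iteratedDeriv 2 (fun u => g u • Γ (h u)) s =
      deriv h s • Γ₂ (h s)
        + (deriv g s • (deriv h s • Γ₁ (h s)) + deriv (deriv g) s • Γ (h s)) := by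
    rw [show (2 : ℕ) = 1 + 1 from rfl, iteratedDeriv_succ, iteratedDeriv_one, hderivF]
    exact hF2.deriv
  have hd := hdet (h s)
  show det3 ((fun u => g u • Γ (h u)) s) (iteratedDeriv 1 (fun u => g u • Γ (h u)) s)
      (iteratedDeriv 2 (fun u => g u • Γ (h u)) s) = Complex.I
  rw [e1, e2]
  simp [det3, Matrix.det_fin_three, Pi.add_apply, Pi.smul_apply, smul_eq_mul,
    Complex.real_smul, Complex.ofReal_inv, Fin.isValue] at hd ⊢
  have hgk' := hgk s
  rw [hgdef] at hgk'
  linear_combination (((deriv h s : ℝ) : ℂ))⁻¹ * ((deriv h s : ℝ) : ℂ) * hd +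
    Complex.I * hgk'
end

section
/- Let Γ : I → ℂ³ be a normalized lift with the identities ⟨Γ,Γ⟩ = ⟨Γ,Γ'⟩ = ⟨Γ',Γ''⟩ = ⟨Γ,Γ'''⟩ = 0, ⟨Γ',Γ'⟩ = −⟨Γ,Γ''⟩ = 1, and define a = Im⟨Γ''',Γ''⟩. If h : J → I is a smooth change of parameter and Γ̃ = (1/h')·(Γ∘h), then the cubic density transforms by ã = (h')³ · (a∘h). -/
open Complex

/-- The cubic Fubini density a = Im⟨Γ''', Γ''⟩ of a lift Γ. -/
noncomputable def cubicDensity (Γ : ℝ → (Fin 3 → ℂ)) (t : ℝ) : ℝ :=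
  (herm (iteratedDeriv 3 Γ t) (iteratedDeriv 2 Γ t)).im

lemma herm_add_left (z z' w : Fin 3 → ℂ) : herm (z + z') w = herm z w + herm z' w := by
  simp [herm]; ring

lemma herm_add_right (z w w' : Fin 3 → ℂ) : herm z (w + w') = herm z w + herm z w' := by
  simp [herm]; ring

lemma herm_real_smul_left (a : ℝ) (z w : Fin 3 → ℂ) :
    herm ((a : ℂ) • z) w = (a : ℂ) * herm z w := by
  simp [herm, Complex.conj_ofReal]; ring

lemma herm_real_smul_right (a : ℝ) (z w : Fin 3 → ℂ) :
    herm z ((a : ℂ) • w) = (a : ℂ) * herm z w := by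
  simp [herm]; ring

lemma herm_self_im (z : Fin 3 → ℂ) : (herm z z).im = 0 := by
  have := herm_conj z z
  have h2 : (herm z z).im = -(herm z z).im := by
    conv_lhs => rw [this]
    simp
  linarith

lemma hasDerivAt_herm {f g : ℝ → Fin 3 → ℂ} {f' g' : Fin 3 → ℂ} {t : ℝ}
    (hf : HasDerivAt f f' t) (hg : HasDerivAt g g' t) :
    HasDerivAt (fun u => herm (f u) (g u)) (herm f' (g t) + herm (f t) g') t := by
  have hfi : ∀ i, HasDerivAt (fun u => f u i) (f' i) t := hasDerivAt_pi.mp hf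
  have hgi : ∀ i, HasDerivAt (fun u => g u i) (g' i) t := hasDerivAt_pi.mp hg
  have H := ((((((hfi 0).star.mul (hgi 2)).sub ((hfi 2).star.mul (hgi 0))).const_mul
      Complex.I)).add ((hfi 1).star.mul (hgi 1)))
  convert H using 1
  any_goals rfl
  simp only [herm, starRingEnd_apply, star_sub, star_mul]
  ring

theorem stmt2 (Γ : ℝ → (Fin 3 → ℂ)) (hΓ : ContDiff ℝ (⊤ : ℕ∞) Γ)
    (h00 : ∀ t, herm (Γ t) (Γ t) = 0)
    (h01 : ∀ t, herm (Γ t) (iteratedDeriv 1 Γ t) = 0)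
    (h12 : ∀ t, herm (iteratedDeriv 1 Γ t) (iteratedDeriv 2 Γ t) = 0)
    (h03 : ∀ t, herm (Γ t) (iteratedDeriv 3 Γ t) = 0)
    (h11 : ∀ t, herm (iteratedDeriv 1 Γ t) (iteratedDeriv 1 Γ t) = 1)
    (h02 : ∀ t, herm (Γ t) (iteratedDeriv 2 Γ t) = -1)
    (h : ℝ → ℝ) (hh : ContDiff ℝ (⊤ : ℕ∞) h) (hh' : ∀ s, deriv h s ≠ 0) :
    ∀ s, cubicDensity (fun u => (((deriv h u : ℝ) : ℂ))⁻¹ • Γ (h u)) s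
      = (deriv h s)^3 * cubicDensity Γ (h s) := by
  intro s
  -- smoothness of iterated derivatives of Γ
  have hΓn : ∀ n : ℕ, ContDiff ℝ (⊤ : ℕ∞) (iteratedDeriv n Γ) := by
    intro n
    rw [iteratedDeriv_eq_iterate]
    exact hΓ.iterate_deriv n
  have hdΓ : ∀ (n : ℕ) (u : ℝ), HasDerivAt (iteratedDeriv n Γ) (iteratedDeriv (n + 1) Γ u) u := by
    intro n u
    rw [iteratedDeriv_succ]
    exact (((hΓn n).differentiable (by simp)) u).hasDerivAt
  set φ : ℝ → ℝ := deriv h with hφdef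
  have hφ : ContDiff ℝ (⊤ : ℕ∞) φ := by
    have := hh.iterate_deriv 1
    simpa using this
  set c : ℝ → ℝ := fun u => (φ u)⁻¹ with hcdef
  have hc : ContDiff ℝ (⊤ : ℕ∞) c := hφ.inv hh'
  have hderiv_of_contDiff : ∀ (r : ℝ → ℝ), ContDiff ℝ (⊤ : ℕ∞) r →
      ContDiff ℝ (⊤ : ℕ∞) (deriv r) := by
    intro r hr
    have := hr.iterate_deriv 1
    simpa using this
  -- key building block
  have key : ∀ (r : ℝ → ℝ), ContDiff ℝ (⊤ : ℕ∞) r → ∀ (n : ℕ) (u : ℝ),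
      HasDerivAt (fun v => ((r v : ℝ) : ℂ) • iteratedDeriv n Γ (h v))
        (((deriv r u : ℝ) : ℂ) • iteratedDeriv n Γ (h u)
          + ((r u * φ u : ℝ) : ℂ) • iteratedDeriv (n + 1) Γ (h u)) u := by
    intro r hr n u
    have h1 : HasDerivAt (fun v => ((r v : ℝ) : ℂ)) ((deriv r u : ℝ) : ℂ) u :=
      HasDerivAt.ofReal_comp (((hr.differentiable (by simp)) u).hasDerivAt)
    have h2 : HasDerivAt (fun v => iteratedDeriv n Γ (h v))
        (deriv h u • iteratedDeriv (n + 1) Γ (h u)) u := by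
      show HasDerivAt (iteratedDeriv n Γ ∘ h) (deriv h u • iteratedDeriv (n + 1) Γ (h u)) u
      exact HasDerivAt.scomp (𝕜 := ℝ) u (hdΓ n (h u))
        (((hh.differentiable (by simp)) u).hasDerivAt)
    have h3 : HasDerivAt (fun v => ((r v : ℝ) : ℂ) • iteratedDeriv n Γ (h v))
        (((r u : ℝ) : ℂ) • (deriv h u • iteratedDeriv (n + 1) Γ (h u))
          + ((deriv r u : ℝ) : ℂ) • iteratedDeriv n Γ (h u)) u := h1.smul h2
    convert h3 using 1
    funext i
    simp [Complex.real_smul, Complex.ofReal_mul]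
    ring
  set r1 : ℝ → ℝ := deriv c with hr1def
  set r2 : ℝ → ℝ := fun u => c u * φ u with hr2def
  have hr1 : ContDiff ℝ (⊤ : ℕ∞) r1 := hderiv_of_contDiff c hc
  have hr2 : ContDiff ℝ (⊤ : ℕ∞) r2 := hc.mul hφ
  set b0 : ℝ → ℝ := deriv r1 with hb0def
  set b1 : ℝ → ℝ := fun u => r1 u * φ u + deriv r2 u with hb1def
  set b2 : ℝ → ℝ := fun u => r2 u * φ u with hb2def
  have hb0 : ContDiff ℝ (⊤ : ℕ∞) b0 := hderiv_of_contDiff r1 hr1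
  have hb1 : ContDiff ℝ (⊤ : ℕ∞) b1 := (hr1.mul hφ).add (hderiv_of_contDiff r2 hr2)
  have hb2 : ContDiff ℝ (⊤ : ℕ∞) b2 := hr2.mul hφ
  set a0 : ℝ → ℝ := deriv b0 with ha0def
  set a1 : ℝ → ℝ := fun u => b0 u * φ u + deriv b1 u with ha1def
  set a2 : ℝ → ℝ := fun u => b1 u * φ u + deriv b2 u with ha2def
  set a3 : ℝ → ℝ := fun u => b2 u * φ u with ha3def
  set F : ℝ → Fin 3 → ℂ := fun u => ((c u : ℝ) : ℂ) • iteratedDeriv 0 Γ (h u) with hFdef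
  set G1 : ℝ → Fin 3 → ℂ := fun u =>
    ((r1 u : ℝ) : ℂ) • iteratedDeriv 0 Γ (h u) + ((r2 u : ℝ) : ℂ) • iteratedDeriv 1 Γ (h u)
    with hG1def
  set G2 : ℝ → Fin 3 → ℂ := fun u =>
    ((b0 u : ℝ) : ℂ) • iteratedDeriv 0 Γ (h u) + ((b1 u : ℝ) : ℂ) • iteratedDeriv 1 Γ (h u)
      + ((b2 u : ℝ) : ℂ) • iteratedDeriv 2 Γ (h u) with hG2def
  set G3 : ℝ → Fin 3 → ℂ := fun u =>
    ((a0 u : ℝ) : ℂ) • iteratedDeriv 0 Γ (h u) + ((a1 u : ℝ) : ℂ) • iteratedDeriv 1 Γ (h u)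
      + ((a2 u : ℝ) : ℂ) • iteratedDeriv 2 Γ (h u) + ((a3 u : ℝ) : ℂ) • iteratedDeriv 3 Γ (h u)
    with hG3def
  have hF1 : ∀ u, HasDerivAt F (G1 u) u := by
    intro u
    have := key c hc 0 u
    simpa [hFdef, hG1def, hr1def, hr2def] using this
  have hF2 : ∀ u, HasDerivAt G1 (G2 u) u := by
    intro u
    have := (key r1 hr1 0 u).add (key r2 hr2 1 u)
    convert this using 1
    any_goals rfl
    simp only [hG2def, hb0def, hb1def, hb2def, Complex.ofReal_add, add_smul]
    abel
  have hF3 : ∀ u, HasDerivAt G2 (G3 u) u := by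
    intro u
    have := ((key b0 hb0 0 u).add (key b1 hb1 1 u)).add (key b2 hb2 2 u)
    convert this using 1
    any_goals rfl
    simp only [hG3def, ha0def, ha1def, ha2def, ha3def, Complex.ofReal_add, add_smul]
    abel
  have e1 : deriv F = G1 := funext fun u => (hF1 u).deriv
  have e2 : deriv G1 = G2 := funext fun u => (hF2 u).deriv
  have e3 : deriv G2 = G3 := funext fun u => (hF3 u).deriv
  have i2 : iteratedDeriv 2 F = G2 := by
    show iteratedDeriv (1 + 1) F = G2
    rw [iteratedDeriv_succ, iteratedDeriv_one, e1, e2]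
  have i3 : iteratedDeriv 3 F = G3 := by
    show iteratedDeriv (2 + 1) F = G3
    rw [iteratedDeriv_succ, i2, e3]
  have hFeq : (fun u => (((deriv h u : ℝ) : ℂ))⁻¹ • Γ (h u)) = F := by
    funext u
    simp [hFdef, hcdef, hφdef, iteratedDeriv_zero, Complex.ofReal_inv]
  rw [hFeq]
  unfold cubicDensity
  rw [i2, i3]
  set t : ℝ := h s with htdef
  -- Hermitian facts at t
  have e10 : herm (iteratedDeriv 1 Γ t) (Γ t) = 0 := by rw [herm_conj, h01 t]; simp
  have e20 : herm (iteratedDeriv 2 Γ t) (Γ t) = -1 := by rw [herm_conj, h02 t]; simp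
  have e21 : herm (iteratedDeriv 2 Γ t) (iteratedDeriv 1 Γ t) = 0 := by
    rw [herm_conj, h12 t]; simp
  have e30 : herm (iteratedDeriv 3 Γ t) (Γ t) = 0 := by rw [herm_conj, h03 t]; simp
  have hder : herm (iteratedDeriv 2 Γ t) (iteratedDeriv 2 Γ t)
      + herm (iteratedDeriv 1 Γ t) (iteratedDeriv 3 Γ t) = 0 := by
    have hψ := hasDerivAt_herm (hdΓ 1 t) (hdΓ 2 t)
    have hψ0 : HasDerivAt (fun u => herm (iteratedDeriv 1 Γ u) (iteratedDeriv 2 Γ u)) 0 t := by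
      have hconst : (fun u => herm (iteratedDeriv 1 Γ u) (iteratedDeriv 2 Γ u))
          = fun _ => (0 : ℂ) := funext h12
      rw [hconst]
      exact hasDerivAt_const t 0
    exact hψ.unique hψ0
  have e31im : (herm (iteratedDeriv 3 Γ t) (iteratedDeriv 1 Γ t)).im = 0 := by
    have h13 : herm (iteratedDeriv 1 Γ t) (iteratedDeriv 3 Γ t)
        = -herm (iteratedDeriv 2 Γ t) (iteratedDeriv 2 Γ t) := by linear_combination hder
    rw [herm_conj, h13]
    simp [herm_self_im]
  -- expand
  simp only [hG2def, hG3def, herm_add_left, herm_add_right, herm_real_smul_left,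
    herm_real_smul_right, iteratedDeriv_zero]
  rw [← htdef]
  rw [h00 t, h01 t, h02 t, e10, h11 t, h12 t, e20, e21, e30]
  simp only [Complex.add_im, Complex.mul_im, Complex.ofReal_re, Complex.ofReal_im,
    Complex.neg_im, Complex.neg_re, Complex.one_im, Complex.one_re, Complex.zero_im,
    Complex.zero_re, herm_self_im, e31im, mul_zero, zero_mul, add_zero, zero_add, neg_zero]
  have hb2s : b2 s = φ s * (c s * φ s) := by simp [hb2def, hr2def]; ring
  have ha3s : a3 s = b2 s * φ s := rfl
  have hcφ : c s * φ s = 1 := inv_mul_cancel₀ (hh' s)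
  rw [ha3s, hb2s, hcφ]
  ring
end

section
/- Let f be a smooth real function and t* a point at which f and all derivatives f', ..., f^{(n)} vanish. Then the 5n-th derivative of (f')⁵ at t* equals c_{1,n}·(f^{(n+1)}(t*))⁵ where c_{1,n} = (5n)!/ (n!)⁵. -/
lemma itd_add {f g : ℝ → ℝ} (hf : ContDiff ℝ (⊤:ℕ∞) f) (hg : ContDiff ℝ (⊤:ℕ∞) g)
    (m : ℕ) (x : ℝ) :
    iteratedDeriv m (f + g) x = iteratedDeriv m f x + iteratedDeriv m g x := by
  simp only [← iteratedDerivWithin_univ]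
  exact iteratedDerivWithin_add (Set.mem_univ x) uniqueDiffOn_univ
    (hf.of_le (by exact_mod_cast le_top)).contDiffWithinAt (hg.of_le (by exact_mod_cast le_top)).contDiffWithinAt

lemma deriv_mul_fun {f g : ℝ → ℝ} (hf : ContDiff ℝ (⊤:ℕ∞) f) (hg : ContDiff ℝ (⊤:ℕ∞) g) :
    deriv (f * g) = deriv f * g + f * deriv g := by
  funext x
  have := deriv_mul (hf.differentiable (by simp) x) (hg.differentiable (by simp) x)
  simpa using this

/-- Key Leibniz-at-a-flat-point lemma. -/
lemma key (t0 : ℝ) : ∀ m : ℕ, ∀ (g₁ g₂ : ℝ → ℝ), ContDiff ℝ (⊤:ℕ∞) g₁ → ContDiff ℝ (⊤:ℕ∞) g₂ →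
    ∀ a b : ℕ, (∀ k < a, iteratedDeriv k g₁ t0 = 0) → (∀ k < b, iteratedDeriv k g₂ t0 = 0) →
    (m < a + b → iteratedDeriv m (g₁ * g₂) t0 = 0) ∧
    (m = a + b → iteratedDeriv m (g₁ * g₂) t0 =
      ((a+b).choose a : ℝ) * iteratedDeriv a g₁ t0 * iteratedDeriv b g₂ t0) := by
  intro m
  induction m with
  | zero =>
    intro g₁ g₂ hg₁ hg₂ a b h₁ h₂
    constructor
    · intro hlt
      rcases Nat.pos_of_ne_zero (fun hab => by omega : a + b ≠ 0) with _
      rcases Nat.eq_zero_or_pos a with ha | ha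
      · have : 0 < b := by omega
        have := h₂ 0 this
        simp [iteratedDeriv_zero] at this ⊢
        simp [this]
      · have := h₁ 0 ha
        simp [iteratedDeriv_zero] at this ⊢
        simp [this]
    · intro he
      have ha : a = 0 := by omega
      have hb : b = 0 := by omega
      subst ha hb
      simp [iteratedDeriv_zero]
  | succ m IH =>
    intro g₁ g₂ hg₁ hg₂ a b h₁ h₂
    have hd₁ : ContDiff ℝ (⊤:ℕ∞) (deriv g₁) := (contDiff_infty_iff_deriv.mp hg₁).2
    have hd₂ : ContDiff ℝ (⊤:ℕ∞) (deriv g₂) := (contDiff_infty_iff_deriv.mp hg₂).2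
    have h₁' : ∀ k < a - 1, iteratedDeriv k (deriv g₁) t0 = 0 := by
      intro k hk
      have : iteratedDeriv (k+1) g₁ t0 = 0 := h₁ _ (by omega)
      rwa [iteratedDeriv_succ', ] at this
    have h₂' : ∀ k < b - 1, iteratedDeriv k (deriv g₂) t0 = 0 := by
      intro k hk
      have : iteratedDeriv (k+1) g₂ t0 = 0 := h₂ _ (by omega)
      rwa [iteratedDeriv_succ'] at this
    have step : iteratedDeriv (m+1) (g₁ * g₂) t0 =
        iteratedDeriv m (deriv g₁ * g₂) t0 + iteratedDeriv m (g₁ * deriv g₂) t0 := by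
      rw [iteratedDeriv_succ', deriv_mul_fun hg₁ hg₂]
      exact itd_add (hd₁.mul hg₂) (hg₁.mul hd₂) m t0
    have T1 := IH (deriv g₁) g₂ hd₁ hg₂ (a-1) b h₁' h₂
    have T2 := IH g₁ (deriv g₂) hg₁ hd₂ a (b-1) h₁ h₂'
    constructor
    · intro hlt
      rw [step, T1.1 (by omega), T2.1 (by omega), add_zero]
    · intro he
      rcases Nat.eq_zero_or_pos a with ha | ha
      · -- a = 0, b = m+1
        subst ha
        have hb : b = m + 1 := by omega
        rw [step, T1.1 (by omega), T2.2 (by omega), zero_add]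
        have : iteratedDeriv (b-1) (deriv g₂) t0 = iteratedDeriv b g₂ t0 := by
          rw [← iteratedDeriv_succ']; congr 1; omega
        rw [this]
        simp
      rcases Nat.eq_zero_or_pos b with hb | hb
      · -- b = 0, a = m+1
        subst hb
        have ha' : a = m + 1 := by omega
        rw [step, T2.1 (by omega), T1.2 (by omega), add_zero]
        have : iteratedDeriv (a-1) (deriv g₁) t0 = iteratedDeriv a g₁ t0 := by
          rw [← iteratedDeriv_succ']; congr 1; omega
        rw [this]
        simp
      · obtain ⟨a', rfl⟩ : ∃ a', a = a' + 1 := ⟨a-1, by omega⟩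
        rw [step, T1.2 (by omega), T2.2 (by omega)]
        have e1 : iteratedDeriv (a'+1-1) (deriv g₁) t0 = iteratedDeriv (a'+1) g₁ t0 := by
          rw [← iteratedDeriv_succ']; congr 1
        have e2 : iteratedDeriv (b-1) (deriv g₂) t0 = iteratedDeriv b g₂ t0 := by
          rw [← iteratedDeriv_succ']; congr 1; omega
        rw [e1, e2]
        have h1 : a' + 1 - 1 + b = m := by omega
        have h2 : a' + 1 + (b-1) = m := by omega
        have h3 : a' + 1 + b = m + 1 := by omega
        rw [h1, h2, h3, Nat.choose_succ_succ (m) (a')]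
        push_cast
        ring

/-- If f and its derivatives up to order n vanish at t₀, then the 5n-th derivative of (f')⁵
at t₀ equals ((5n)!/(n!)⁵)·(f⁽ⁿ⁺¹⁾(t₀))⁵. -/
theorem stmt6 (f : ℝ → ℝ) (hf : ContDiff ℝ (⊤ : ℕ∞) f) (n : ℕ) (t0 : ℝ)
    (h : ∀ k ≤ n, iteratedDeriv k f t0 = 0) :
    iteratedDeriv (5*n) (fun t => (deriv f t)^5) t0
      = (((5*n).factorial : ℝ) / ((n.factorial : ℝ))^5) * (iteratedDeriv (n+1) f t0)^5 := by
  set g := deriv f with hgdef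
  have hg : ContDiff ℝ (⊤:ℕ∞) g := (contDiff_infty_iff_deriv.mp hf).2
  have hgv : ∀ k < n, iteratedDeriv k g t0 = 0 := by
    intro k hk
    have := h (k+1) (by omega)
    rwa [iteratedDeriv_succ'] at this
  have hX : iteratedDeriv (n+1) f t0 = iteratedDeriv n g t0 := by
    rw [iteratedDeriv_succ']
  set X := iteratedDeriv n g t0 with hXdef
  have hg2 : ContDiff ℝ (⊤:ℕ∞) (g * g) := hg.mul hg
  have hg3 : ContDiff ℝ (⊤:ℕ∞) (g * (g * g)) := hg.mul hg2
  have K2 := fun m => key t0 m g g hg hg n n hgv hgv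
  have hg2v : ∀ k < 2*n, iteratedDeriv k (g*g) t0 = 0 := by
    intro k hk; exact (K2 k).1 (by omega)
  have hv2 : iteratedDeriv (2*n) (g*g) t0 = ((2*n).choose n : ℝ) * X * X := by
    have := (K2 (2*n)).2 (by omega)
    rwa [show n + n = 2*n by omega] at this
  have K3 := fun m => key t0 m g (g*g) hg hg2 n (2*n) hgv hg2v
  have hg3v : ∀ k < 3*n, iteratedDeriv k (g*(g*g)) t0 = 0 := by
    intro k hk; exact (K3 k).1 (by omega)
  have hv3 : iteratedDeriv (3*n) (g*(g*g)) t0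
      = ((3*n).choose n : ℝ) * X * (((2*n).choose n : ℝ) * X * X) := by
    have := (K3 (3*n)).2 (by omega)
    rw [show n + 2*n = 3*n by omega] at this
    rw [this, hv2]
  have K5 := key t0 (5*n) (g*g) (g*(g*g)) hg2 hg3 (2*n) (3*n) hg2v hg3v
  have hv5 := K5.2 (by omega)
  rw [show 2*n + 3*n = 5*n by omega] at hv5
  have hfun : (fun t => (deriv f t)^5) = (g*g) * (g*(g*g)) := by
    funext t; simp only [Pi.mul_apply, hgdef]; ring
  have hnat : (5*n).choose (2*n) * ((3*n).choose n) * ((2*n).choose n)^2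
      * (n.factorial)^5 = (5*n).factorial := by
    have c1 := Nat.choose_mul_factorial_mul_factorial (show n ≤ 2*n by omega)
    have c2 := Nat.choose_mul_factorial_mul_factorial (show n ≤ 3*n by omega)
    have c3 := Nat.choose_mul_factorial_mul_factorial (show 2*n ≤ 5*n by omega)
    rw [show 2*n - n = n by omega] at c1
    rw [show 3*n - n = 2*n by omega] at c2
    rw [show 5*n - 2*n = 3*n by omega] at c3
    rw [← c3, ← c2, ← c1]; ring
  have hC : (((5*n).choose (2*n) : ℝ)) * (((3*n).choose n : ℝ)) * (((2*n).choose n : ℝ))^2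
      = ((5*n).factorial : ℝ) / ((n.factorial : ℝ))^5 := by
    rw [eq_div_iff (by positivity)]
    exact_mod_cast hnat
  rw [hfun, hv5, hv2, hv3, hX, ← hC]
  ring
end

section
/- Suppose a is a smooth real function on an interval satisfying the ODE 𝔱 = 0, where 𝔱 = −6160 a'⁵ + 13200 a a'³ a'' − 5400 a² a' a''² − 3600 a² a'² a''' + 1350 a³ a'' a''' + 675 a³ a' a⁗ − 81 a⁴ a⁽⁵⁾. If a(t*) = 0 at some point t*, then all derivatives of a vanish at t*: a^{(n)}(t*) = 0 for every n ≥ 0. -/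
open Filter Asymptotics Topology Set

lemma peano (t0 : ℝ) : ∀ (m : ℕ) (f : ℝ → ℝ), ContDiff ℝ (⊤ : ℕ∞) f →
    (∀ k ≤ m, iteratedDeriv k f t0 = 0) →
    f =o[𝓝 t0] fun t => (t - t0) ^ m := by
  intro m
  induction m with
  | zero =>
    intro f hf h
    simp only [pow_zero]
    rw [isLittleO_one_iff]
    have := (hf.continuous.tendsto t0)
    rwa [show f t0 = 0 from by simpa using h 0 le_rfl] at this
  | succ m IH =>
    intro f hf h
    have hd : deriv f =o[𝓝 t0] fun t => (t - t0) ^ m := by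
      apply IH _ ((contDiff_infty_iff_deriv.mp hf).2)
      intro k hk
      rw [← iteratedDeriv_succ']
      exact h (k+1) (by omega)
    rw [isLittleO_iff]
    intro c hc
    rw [isLittleO_iff] at hd
    have hev := hd hc
    rw [Metric.eventually_nhds_iff] at hev ⊢
    obtain ⟨ε, hε, hb⟩ := hev
    refine ⟨ε, hε, fun t ht => ?_⟩
    have hf0 : f t0 = 0 := by simpa using h 0 (by omega)
    have key : ‖f t - f t0‖ ≤ (c * |t - t0| ^ m) * ‖t - t0‖ := by
      apply Convex.norm_image_sub_le_of_norm_deriv_le (s := Set.uIcc t0 t)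
        (fun x _ => (hf.differentiable (by simp)).differentiableAt)
        ?_ (convex_uIcc t0 t) (Set.left_mem_uIcc) (Set.right_mem_uIcc)
      intro x hx
      have h1 : |x - t0| ≤ |t - t0| := by
        rw [Set.uIcc_eq_union] at hx
        rcases hx with hx | hx <;> rw [Set.mem_Icc] at hx <;>
          rw [abs_sub_le_iff] <;> constructor <;> cases abs_cases (t - t0) <;> linarith
      calc ‖deriv f x‖ ≤ c * ‖(x - t0) ^ m‖ := by
            apply hb; rw [Real.dist_eq]; calc |x - t0| ≤ |t - t0| := h1
                                          _ < ε := by rwa [Real.dist_eq] at ht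
        _ ≤ c * |t - t0| ^ m := by
            rw [norm_pow]; exact mul_le_mul_of_nonneg_left (pow_le_pow_left₀ (abs_nonneg _) h1 m) hc.le
    rw [hf0, sub_zero] at key
    calc ‖f t‖ ≤ (c * |t - t0| ^ m) * ‖t - t0‖ := key
      _ = c * ‖(t - t0) ^ (m+1)‖ := by rw [Real.norm_eq_abs, Real.norm_eq_abs, abs_pow]; ring

lemma iteratedDeriv_const_mul_pow (C t0 : ℝ) (n : ℕ) :
    ∀ k, iteratedDeriv k (fun t => C * (t - t0) ^ n)
      = fun t => (C * n.descFactorial k) * (t - t0) ^ (n - k) := by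
  intro k
  induction k with
  | zero => simp
  | succ k IH =>
    rw [iteratedDeriv_succ, IH]
    funext t
    have : HasDerivAt (fun t : ℝ => C * ↑(n.descFactorial k) * (t - t0) ^ (n - k))
        (C * n.descFactorial k * (↑(n - k) * (t - t0) ^ (n - k - 1) * 1)) t :=
      (((hasDerivAt_id t).sub_const t0).pow (n-k)).const_mul _
    rw [this.deriv, Nat.descFactorial_succ]
    rcases le_or_gt (k+1) n with h | h
    · rw [show n - k - 1 = n - (k+1) by omega]; push_cast; ring
    · rw [Nat.sub_eq_zero_of_le (by omega : n ≤ k)]; simp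

lemma contDiff_const_mul_pow (C t0 : ℝ) (n : ℕ) :
    ContDiff ℝ (⊤ : ℕ∞) (fun t : ℝ => C * (t - t0) ^ n) :=
  contDiff_const.mul (((contDiff_id).sub contDiff_const).pow n)

lemma iteratedDeriv_sub' {n : ℕ} {f g : ℝ → ℝ} (hf : ContDiff ℝ (⊤:ℕ∞) f)
    (hg : ContDiff ℝ (⊤:ℕ∞) g) (x : ℝ) :
    iteratedDeriv n (fun t => f t - g t) x = iteratedDeriv n f x - iteratedDeriv n g x := by
  simp_rw [← iteratedDerivWithin_univ]
  exact iteratedDerivWithin_sub (Set.mem_univ x) uniqueDiffOn_univ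
    (hf.contDiffWithinAt.of_le (m := (n : WithTop ℕ∞)) (by exact_mod_cast le_top)) (hg.contDiffWithinAt.of_le (m := (n : WithTop ℕ∞)) (by exact_mod_cast le_top))

lemma taylor_peano {f : ℝ → ℝ} (hf : ContDiff ℝ (⊤:ℕ∞) f) (t0 : ℝ) (n : ℕ)
    (h : ∀ k < n, iteratedDeriv k f t0 = 0) :
    (fun t => f t - (iteratedDeriv n f t0 / n.factorial) * (t - t0) ^ n)
      =o[𝓝 t0] fun t => (t - t0) ^ n := by
  set C := iteratedDeriv n f t0 / n.factorial with hC
  apply peano t0 n _ (hf.sub (contDiff_const_mul_pow C t0 n))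
  intro k hk
  rw [iteratedDeriv_sub' hf (contDiff_const_mul_pow C t0 n),
    iteratedDeriv_const_mul_pow]
  rcases lt_or_eq_of_le hk with hk' | hk'
  · rw [show n - k = (n - k - 1) + 1 by omega]
    simp [h k hk']
  · subst hk'
    simp only [Nat.sub_self, pow_zero, Nat.descFactorial_self, mul_one, hC]
    have : (k.factorial : ℝ) ≠ 0 := Nat.cast_ne_zero.mpr k.factorial_ne_zero
    field_simp
    ring

lemma approx_isBigO {t0 : ℝ} {e : ℕ} {c : ℝ} {f : ℝ → ℝ}
    (hf : (fun t => f t - c * (t - t0) ^ e) =o[𝓝 t0] fun t => (t - t0) ^ e) :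
    f =O[𝓝 t0] fun t => (t - t0) ^ e := by
  have h2 : (fun t => c * (t - t0) ^ e) =O[𝓝 t0] fun t => (t - t0) ^ e :=
    (isBigO_refl _ _).const_mul_left c
  simpa using hf.isBigO.add h2

lemma approx_mul {t0 : ℝ} {i j : ℕ} {c d : ℝ} {f g : ℝ → ℝ}
    (hf : (fun t => f t - c * (t - t0) ^ i) =o[𝓝 t0] fun t => (t - t0) ^ i)
    (hg : (fun t => g t - d * (t - t0) ^ j) =o[𝓝 t0] fun t => (t - t0) ^ j) :
    (fun t => f t * g t - (c * d) * (t - t0) ^ (i + j)) =o[𝓝 t0] fun t => (t - t0) ^ (i + j) := by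
  have h1 : (fun t => (f t - c * (t - t0)^i) * g t) =o[𝓝 t0] fun t => (t - t0) ^ (i+j) := by
    have := hf.mul_isBigO (approx_isBigO hg)
    simpa [pow_add] using this
  have h2 : (fun t => (c * (t - t0)^i) * (g t - d * (t - t0)^j)) =o[𝓝 t0]
      fun t => (t - t0) ^ (i+j) := by
    have := ((isBigO_refl (fun t : ℝ => (t - t0)^i) (𝓝 t0)).const_mul_left c).mul_isLittleO hg
    simpa [pow_add] using this
  have := h1.add h2
  apply this.congr' _ EventuallyEq.rfl
  filter_upwards with t
  ring

lemma pow_littleO {t0 : ℝ} {E N : ℕ} (h : N < E) :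
    (fun t : ℝ => (t - t0) ^ E) =o[𝓝 t0] fun t => (t - t0) ^ N := by
  have h1 : Tendsto (fun t : ℝ => t - t0) (𝓝 t0) (𝓝 0) := by
    simpa using (continuous_sub_right t0).tendsto t0
  exact (isLittleO_pow_pow h).comp_tendsto h1

lemma bigO_pow_littleO {t0 : ℝ} {E N : ℕ} (h : N < E) {f : ℝ → ℝ}
    (hf : f =O[𝓝 t0] fun t => (t - t0) ^ E) : f =o[𝓝 t0] fun t => (t - t0) ^ N :=
  hf.trans_isLittleO (pow_littleO h)

lemma const_eq_zero_of_littleO {t0 K : ℝ} {N : ℕ}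
    (h : (fun t => K * (t - t0) ^ N) =o[𝓝 t0] fun t => (t - t0) ^ N) : K = 0 := by
  by_contra hK
  have hev := (isLittleO_iff.mp h) (show (0:ℝ) < |K|/2 by positivity)
  have hev' : ∀ᶠ t in 𝓝[≠] t0, ‖K * (t - t0) ^ N‖ ≤ |K|/2 * ‖(t - t0) ^ N‖ :=
    nhdsWithin_le_nhds hev
  obtain ⟨t, ht, hne⟩ := (hev'.and self_mem_nhdsWithin).exists
  have hpos : (0:ℝ) < |(t - t0) ^ N| := by
    apply abs_pos.mpr
    exact pow_ne_zero _ (sub_ne_zero.mpr hne)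
  rw [Real.norm_eq_abs, Real.norm_eq_abs, abs_mul] at ht
  nlinarith [abs_pos.mpr hK]

lemma approx_const_mul {t0 : ℝ} {e : ℕ} {c : ℝ} {f : ℝ → ℝ} (K : ℝ)
    (h : (fun t => f t - c * (t - t0) ^ e) =o[𝓝 t0] fun t => (t - t0) ^ e) :
    (fun t => K * f t - (K * c) * (t - t0) ^ e) =o[𝓝 t0] fun t => (t - t0) ^ e := by
  have h2 := h.const_mul_left K
  refine h2.congr' ?_ EventuallyEq.rfl
  filter_upwards with t
  ring

lemma approx_cast {t0 : ℝ} {e e' : ℕ} {c : ℝ} {f : ℝ → ℝ} (he : e = e')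
    (h : (fun t => f t - c * (t - t0) ^ e) =o[𝓝 t0] fun t => (t - t0) ^ e) :
    (fun t => f t - c * (t - t0) ^ e') =o[𝓝 t0] fun t => (t - t0) ^ e' := he ▸ h

lemma bigO_mul_pow {t0 : ℝ} {i j : ℕ} {f g : ℝ → ℝ}
    (hf : f =O[𝓝 t0] fun t => (t - t0) ^ i) (hg : g =O[𝓝 t0] fun t => (t - t0) ^ j) :
    (fun t => f t * g t) =O[𝓝 t0] fun t => (t - t0) ^ (i + j) := by
  simpa [pow_add] using hf.mul hg


set_option maxHeartbeats 1000000 in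
lemma final_alg (c D0 D1 D2 D3 D4 D5 F : ℝ) (hF : F ≠ 0)
    (hQ : -6160 * (D1 * D1 * D1 * D1 * D1)
      + 13200 * (D0 * D1 * D1 * D1 * D2)
      - 5400 * (D0 * D0 * D1 * D2 * D2)
      - 3600 * (D0 * D0 * D1 * D1 * D3)
      + 1350 * (D0 * D0 * D0 * D2 * D3)
      + 675 * (D0 * D0 * D0 * D1 * D4)
      - 81 * (D0 * D0 * D0 * D0 * D5) < 0)
    (h : -6160 * (c * D1 / F * (c * D1 / F) * (c * D1 / F) * (c * D1 / F) * (c * D1 / F))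
      + 13200 * (c * D0 / F * (c * D1 / F) * (c * D1 / F) * (c * D1 / F) * (c * D2 / F))
      + -5400 * (c * D0 / F * (c * D0 / F) * (c * D1 / F) * (c * D2 / F) * (c * D2 / F))
      + -3600 * (c * D0 / F * (c * D0 / F) * (c * D1 / F) * (c * D1 / F) * (c * D3 / F))
      + 1350 * (c * D0 / F * (c * D0 / F) * (c * D0 / F) * (c * D2 / F) * (c * D3 / F))
      + 675 * (c * D0 / F * (c * D0 / F) * (c * D0 / F) * (c * D1 / F) * (c * D4 / F))
      + -81 * (c * D0 / F * (c * D0 / F) * (c * D0 / F) * (c * D0 / F) * (c * D5 / F)) = 0) :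
    c = 0 := by
  have hkey : c ^ 5 * (-6160 * (D1 * D1 * D1 * D1 * D1)
      + 13200 * (D0 * D1 * D1 * D1 * D2)
      - 5400 * (D0 * D0 * D1 * D2 * D2)
      - 3600 * (D0 * D0 * D1 * D1 * D3)
      + 1350 * (D0 * D0 * D0 * D2 * D3)
      + 675 * (D0 * D0 * D0 * D1 * D4)
      - 81 * (D0 * D0 * D0 * D0 * D5)) = F ^ 5 * (-6160 * (c * D1 / F * (c * D1 / F) * (c * D1 / F) * (c * D1 / F) * (c * D1 / F))
      + 13200 * (c * D0 / F * (c * D1 / F) * (c * D1 / F) * (c * D1 / F) * (c * D2 / F))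
      + -5400 * (c * D0 / F * (c * D0 / F) * (c * D1 / F) * (c * D2 / F) * (c * D2 / F))
      + -3600 * (c * D0 / F * (c * D0 / F) * (c * D1 / F) * (c * D1 / F) * (c * D3 / F))
      + 1350 * (c * D0 / F * (c * D0 / F) * (c * D0 / F) * (c * D2 / F) * (c * D3 / F))
      + 675 * (c * D0 / F * (c * D0 / F) * (c * D0 / F) * (c * D1 / F) * (c * D4 / F))
      + -81 * (c * D0 / F * (c * D0 / F) * (c * D0 / F) * (c * D0 / F) * (c * D5 / F))) := by
    field_simp
    ring
  rw [h, mul_zero] at hkey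
  have hc5 : c ^ 5 = 0 := by
    rcases mul_eq_zero.mp hkey with h' | h'
    · exact h'
    · exact absurd h' hQ.ne
  exact pow_eq_zero_iff (by norm_num) |>.mp hc5


lemma Qneg (m : ℕ) : -6160 * (((m+1).descFactorial 1 : ℝ) * ((m+1).descFactorial 1 : ℝ) * ((m+1).descFactorial 1 : ℝ) * ((m+1).descFactorial 1 : ℝ) * ((m+1).descFactorial 1 : ℝ))
    + 13200 * (((m+1).descFactorial 0 : ℝ) * ((m+1).descFactorial 1 : ℝ) * ((m+1).descFactorial 1 : ℝ) * ((m+1).descFactorial 1 : ℝ) * ((m+1).descFactorial 2 : ℝ))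
    - 5400 * (((m+1).descFactorial 0 : ℝ) * ((m+1).descFactorial 0 : ℝ) * ((m+1).descFactorial 1 : ℝ) * ((m+1).descFactorial 2 : ℝ) * ((m+1).descFactorial 2 : ℝ))
    - 3600 * (((m+1).descFactorial 0 : ℝ) * ((m+1).descFactorial 0 : ℝ) * ((m+1).descFactorial 1 : ℝ) * ((m+1).descFactorial 1 : ℝ) * ((m+1).descFactorial 3 : ℝ))
    + 1350 * (((m+1).descFactorial 0 : ℝ) * ((m+1).descFactorial 0 : ℝ) * ((m+1).descFactorial 0 : ℝ) * ((m+1).descFactorial 2 : ℝ) * ((m+1).descFactorial 3 : ℝ))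
    + 675 * (((m+1).descFactorial 0 : ℝ) * ((m+1).descFactorial 0 : ℝ) * ((m+1).descFactorial 0 : ℝ) * ((m+1).descFactorial 1 : ℝ) * ((m+1).descFactorial 4 : ℝ))
    - 81 * (((m+1).descFactorial 0 : ℝ) * ((m+1).descFactorial 0 : ℝ) * ((m+1).descFactorial 0 : ℝ) * ((m+1).descFactorial 0 : ℝ) * ((m+1).descFactorial 5 : ℝ)) < 0 := by
  rcases le_or_gt (m+1) 4 with h4 | h4
  · have hm3 : m ≤ 3 := by omega
    interval_cases m <;> norm_num [Nat.descFactorial]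
  · have cm1 : ((m-1:ℕ):ℝ) = (m:ℝ)-1 := by
      rw [Nat.cast_sub (by omega : 1 ≤ m)]; norm_num
    have cm2 : ((m-2:ℕ):ℝ) = (m:ℝ)-2 := by
      rw [Nat.cast_sub (by omega : 2 ≤ m)]; norm_num
    have cm3 : ((m-3:ℕ):ℝ) = (m:ℝ)-3 := by
      rw [Nat.cast_sub (by omega : 3 ≤ m)]; norm_num
    have e2 : ((m+1).descFactorial 2 : ℝ) = ((m:ℝ)+1)*(m:ℝ) := by
      rw [Nat.descFactorial_succ, Nat.descFactorial_one]
      push_cast [cm1, cm2, cm3, show (m+1) - 1 = m by omega]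
      ring
    have e3 : ((m+1).descFactorial 3 : ℝ) = ((m:ℝ)+1)*(m:ℝ)*((m:ℝ)-1) := by
      rw [Nat.descFactorial_succ, Nat.descFactorial_succ, Nat.descFactorial_one]
      push_cast [cm1, cm2, cm3, show (m+1) - 1 = m by omega, Nat.cast_sub (show 2 ≤ m+1 by omega)]
      ring
    have e4 : ((m+1).descFactorial 4 : ℝ) = ((m:ℝ)+1)*(m:ℝ)*((m:ℝ)-1)*((m:ℝ)-2) := by
      rw [Nat.descFactorial_succ, Nat.descFactorial_succ, Nat.descFactorial_succ,
        Nat.descFactorial_one]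
      push_cast [cm1, cm2, cm3, show (m+1) - 1 = m by omega, Nat.cast_sub (show 2 ≤ m+1 by omega),
        Nat.cast_sub (show 3 ≤ m+1 by omega)]
      ring
    have e5 : ((m+1).descFactorial 5 : ℝ)
        = ((m:ℝ)+1)*(m:ℝ)*((m:ℝ)-1)*((m:ℝ)-2)*((m:ℝ)-3) := by
      rw [Nat.descFactorial_succ, Nat.descFactorial_succ, Nat.descFactorial_succ,
        Nat.descFactorial_succ, Nat.descFactorial_one]
      push_cast [cm1, cm2, cm3, show (m+1) - 1 = m by omega, Nat.cast_sub (show 2 ≤ m+1 by omega),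
        Nat.cast_sub (show 3 ≤ m+1 by omega), Nat.cast_sub (show 4 ≤ m+1 by omega)]
      ring
    rw [e2, e3, e4, e5]
    simp only [Nat.descFactorial_zero, Nat.descFactorial_one, Nat.cast_one]
    push_cast
    have hm4 : (4:ℝ) ≤ (m:ℝ) := by exact_mod_cast (by omega : 4 ≤ m)
    nlinarith [sq_nonneg ((m:ℝ)), sq_nonneg ((m:ℝ)+1),
      mul_pos (show (0:ℝ) < (m:ℝ) by linarith) (show (0:ℝ) < (m:ℝ)+1 by linarith)]

/-- If a smooth function a satisfies the stress equation 𝔱 = 0 and vanishes at a point,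
then all of its derivatives vanish at that point. -/
theorem stmt7 (a : ℝ → ℝ) (ha : ContDiff ℝ (⊤ : ℕ∞) a)
    (hode : ∀ t, -6160 * (deriv a t)^5
      + 13200 * a t * (deriv a t)^3 * (iteratedDeriv 2 a t)
      - 5400 * (a t)^2 * deriv a t * (iteratedDeriv 2 a t)^2
      - 3600 * (a t)^2 * (deriv a t)^2 * iteratedDeriv 3 a t
      + 1350 * (a t)^3 * iteratedDeriv 2 a t * iteratedDeriv 3 a t
      + 675 * (a t)^3 * deriv a t * iteratedDeriv 4 a t
      - 81 * (a t)^4 * iteratedDeriv 5 a t = 0)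
    (t0 : ℝ) (h0 : a t0 = 0) :
    ∀ n : ℕ, iteratedDeriv n a t0 = 0 := by
  intro n
  induction n using Nat.strong_induction_on with
  | _ n IH =>
  rcases n with _ | m
  · simpa using h0
  -- setup
  set u : ℕ → ℝ → ℝ := fun j => iteratedDeriv j a with hu
  set c : ℝ := iteratedDeriv (m+1) a t0 with hc
  set d : ℕ → ℝ := fun j => c * ((m+1).descFactorial j : ℝ) / ((m+1).factorial : ℝ) with hd
  have hsm : ∀ j : ℕ, ContDiff ℝ (⊤:ℕ∞) (u j) := by
    intro j; rw [hu]; simp only [iteratedDeriv_eq_iterate]; exact ha.iterate_deriv j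
  have hder : ∀ j k : ℕ, iteratedDeriv k (u j) t0 = iteratedDeriv (k + j) a t0 := by
    intro j k
    simp only [hu, iteratedDeriv_eq_iterate]
    exact congrFun (Function.iterate_add_apply deriv k j a).symm t0
  have hfacpos : (0:ℝ) < ((m+1).factorial : ℝ) := by
    exact_mod_cast (m+1).factorial_pos
  have hdj : ∀ j, j ≤ m+1 → c / ((((m+1) - j).factorial : ℝ)) = d j := by
    intro j hj
    have hnat := Nat.factorial_mul_descFactorial hj
    have hcast : ((((m+1) - j).factorial : ℝ)) * (((m+1).descFactorial j : ℝ))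
        = (((m+1).factorial : ℝ)) := by exact_mod_cast congrArg (Nat.cast (R := ℝ)) hnat
    have h1 : ((((m+1) - j).factorial : ℝ)) ≠ 0 := by
      exact_mod_cast ((m+1) - j).factorial_ne_zero
    rw [hd]
    simp only []
    rw [div_eq_div_iff h1 (ne_of_gt hfacpos)]
    linear_combination (-c) * hcast
  have hA : ∀ j, j ≤ m+1 →
      (fun t => u j t - d j * (t - t0) ^ ((m+1) - j)) =o[𝓝 t0]
        fun t => (t - t0) ^ ((m+1) - j) := by
    intro j hj
    have h1 := taylor_peano (hsm j) t0 ((m+1) - j) ?_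
    · have h2 : iteratedDeriv ((m+1) - j) (u j) t0 = c := by
        rw [hder]; congr 1; omega
      rw [h2, hdj j hj] at h1
      exact h1
    · intro k hk
      rw [hder]
      exact IH (k + j) (by omega)
  have hO : ∀ j, (u j) =O[𝓝 t0] fun t => (t - t0) ^ ((m+1) - j) := by
    intro j
    rcases le_or_gt j (m+1) with hj | hj
    · exact approx_isBigO (hA j hj)
    · rw [Nat.sub_eq_zero_of_le hj.le]
      simpa using ((hsm j).continuous.tendsto t0).isBigO_one ℝ
  have hdz : ∀ j, m+1 < j → d j = 0 := by
    intro j hj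
    rw [hd]
    simp [Nat.descFactorial_eq_zero_iff_lt.mpr hj]
  have hode' : ∀ t, -6160 * (u 1 t)^5
      + 13200 * u 0 t * (u 1 t)^3 * u 2 t
      - 5400 * (u 0 t)^2 * u 1 t * (u 2 t)^2
      - 3600 * (u 0 t)^2 * (u 1 t)^2 * u 3 t
      + 1350 * (u 0 t)^3 * u 2 t * u 3 t
      + 675 * (u 0 t)^3 * u 1 t * u 4 t
      - 81 * (u 0 t)^4 * u 5 t = 0 := by
    intro t
    simpa [hu, iteratedDeriv_one, iteratedDeriv_zero] using hode t
  have h1M : 1 ≤ m+1 := by omega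
  have h0M : 0 ≤ m+1 := by omega
  -- monomial 1 : -6160 * u1^5, always good
  have hT1 : (fun t => -6160 * (u 1 t * u 1 t * u 1 t * u 1 t * u 1 t)
      - (-6160 * (d 1 * d 1 * d 1 * d 1 * d 1)) * (t - t0) ^ (5*m)) =o[𝓝 t0]
        fun t => (t - t0) ^ (5*m) := by
    have q := approx_mul (approx_mul (approx_mul (approx_mul (hA 1 h1M) (hA 1 h1M))
      (hA 1 h1M)) (hA 1 h1M)) (hA 1 h1M)
    exact approx_const_mul (-6160) (approx_cast (by omega) q)
  -- monomial 2 : 13200 * u0 * u1^3 * u2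
  have hT2 : (fun t => 13200 * (u 0 t * u 1 t * u 1 t * u 1 t * u 2 t)
      - (13200 * (d 0 * d 1 * d 1 * d 1 * d 2)) * (t - t0) ^ (5*m)) =o[𝓝 t0]
        fun t => (t - t0) ^ (5*m) := by
    rcases le_or_gt 2 (m+1) with h2 | h2
    · have q := approx_mul (approx_mul (approx_mul (approx_mul (hA 0 h0M) (hA 1 h1M))
        (hA 1 h1M)) (hA 1 h1M)) (hA 2 h2)
      refine approx_const_mul (13200) (approx_cast ?_ q)
      omega
    · have hb := bigO_mul_pow (bigO_mul_pow (bigO_mul_pow (bigO_mul_pow (hO 0) (hO 1))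
        (hO 1)) (hO 1)) (hO 2)
      have hl := (bigO_pow_littleO (N := 5*m) (by omega) hb).const_mul_left 13200
      refine hl.congr' ?_ EventuallyEq.rfl
      filter_upwards with t
      simp [hdz 2 h2]
  -- monomial 3 : -5400 * u0^2 * u1 * u2^2
  have hT3 : (fun t => -5400 * (u 0 t * u 0 t * u 1 t * u 2 t * u 2 t)
      - (-5400 * (d 0 * d 0 * d 1 * d 2 * d 2)) * (t - t0) ^ (5*m)) =o[𝓝 t0]
        fun t => (t - t0) ^ (5*m) := by
    rcases le_or_gt 2 (m+1) with h2 | h2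
    · have q := approx_mul (approx_mul (approx_mul (approx_mul (hA 0 h0M) (hA 0 h0M))
        (hA 1 h1M)) (hA 2 h2)) (hA 2 h2)
      refine approx_const_mul (-5400) (approx_cast ?_ q)
      omega
    · have hb := bigO_mul_pow (bigO_mul_pow (bigO_mul_pow (bigO_mul_pow (hO 0) (hO 0))
        (hO 1)) (hO 2)) (hO 2)
      have hl := (bigO_pow_littleO (N := 5*m) (by omega) hb).const_mul_left (-5400)
      refine hl.congr' ?_ EventuallyEq.rfl
      filter_upwards with t
      simp [hdz 2 h2]
  -- monomial 4 : -3600 * u0^2 * u1^2 * u3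
  have hT4 : (fun t => -3600 * (u 0 t * u 0 t * u 1 t * u 1 t * u 3 t)
      - (-3600 * (d 0 * d 0 * d 1 * d 1 * d 3)) * (t - t0) ^ (5*m)) =o[𝓝 t0]
        fun t => (t - t0) ^ (5*m) := by
    rcases le_or_gt 3 (m+1) with h3 | h3
    · have q := approx_mul (approx_mul (approx_mul (approx_mul (hA 0 h0M) (hA 0 h0M))
        (hA 1 h1M)) (hA 1 h1M)) (hA 3 h3)
      refine approx_const_mul (-3600) (approx_cast ?_ q)
      omega
    · have hb := bigO_mul_pow (bigO_mul_pow (bigO_mul_pow (bigO_mul_pow (hO 0) (hO 0))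
        (hO 1)) (hO 1)) (hO 3)
      have hl := (bigO_pow_littleO (N := 5*m) (by omega) hb).const_mul_left (-3600)
      refine hl.congr' ?_ EventuallyEq.rfl
      filter_upwards with t
      simp [hdz 3 h3]
  -- monomial 5 : 1350 * u0^3 * u2 * u3
  have hT5 : (fun t => 1350 * (u 0 t * u 0 t * u 0 t * u 2 t * u 3 t)
      - (1350 * (d 0 * d 0 * d 0 * d 2 * d 3)) * (t - t0) ^ (5*m)) =o[𝓝 t0]
        fun t => (t - t0) ^ (5*m) := by
    rcases le_or_gt 3 (m+1) with h3 | h3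
    · have q := approx_mul (approx_mul (approx_mul (approx_mul (hA 0 h0M) (hA 0 h0M))
        (hA 0 h0M)) (hA 2 (by omega))) (hA 3 h3)
      refine approx_const_mul (1350) (approx_cast ?_ q)
      omega
    · have hb := bigO_mul_pow (bigO_mul_pow (bigO_mul_pow (bigO_mul_pow (hO 0) (hO 0))
        (hO 0)) (hO 2)) (hO 3)
      have hl := (bigO_pow_littleO (N := 5*m) (by omega) hb).const_mul_left 1350
      refine hl.congr' ?_ EventuallyEq.rfl
      filter_upwards with t
      simp [hdz 3 h3]
  -- monomial 6 : 675 * u0^3 * u1 * u4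
  have hT6 : (fun t => 675 * (u 0 t * u 0 t * u 0 t * u 1 t * u 4 t)
      - (675 * (d 0 * d 0 * d 0 * d 1 * d 4)) * (t - t0) ^ (5*m)) =o[𝓝 t0]
        fun t => (t - t0) ^ (5*m) := by
    rcases le_or_gt 4 (m+1) with h4 | h4
    · have q := approx_mul (approx_mul (approx_mul (approx_mul (hA 0 h0M) (hA 0 h0M))
        (hA 0 h0M)) (hA 1 h1M)) (hA 4 h4)
      refine approx_const_mul (675) (approx_cast ?_ q)
      omega
    · have hb := bigO_mul_pow (bigO_mul_pow (bigO_mul_pow (bigO_mul_pow (hO 0) (hO 0))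
        (hO 0)) (hO 1)) (hO 4)
      have hl := (bigO_pow_littleO (N := 5*m) (by omega) hb).const_mul_left 675
      refine hl.congr' ?_ EventuallyEq.rfl
      filter_upwards with t
      simp [hdz 4 h4]
  -- monomial 7 : -81 * u0^4 * u5
  have hT7 : (fun t => -81 * (u 0 t * u 0 t * u 0 t * u 0 t * u 5 t)
      - (-81 * (d 0 * d 0 * d 0 * d 0 * d 5)) * (t - t0) ^ (5*m)) =o[𝓝 t0]
        fun t => (t - t0) ^ (5*m) := by
    rcases le_or_gt 5 (m+1) with h5 | h5
    · have q := approx_mul (approx_mul (approx_mul (approx_mul (hA 0 h0M) (hA 0 h0M))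
        (hA 0 h0M)) (hA 0 h0M)) (hA 5 h5)
      refine approx_const_mul (-81) (approx_cast ?_ q)
      omega
    · have hb := bigO_mul_pow (bigO_mul_pow (bigO_mul_pow (bigO_mul_pow (hO 0) (hO 0))
        (hO 0)) (hO 0)) (hO 5)
      have hl := (bigO_pow_littleO (N := 5*m) (by omega) hb).const_mul_left (-81)
      refine hl.congr' ?_ EventuallyEq.rfl
      filter_upwards with t
      simp [hdz 5 h5]
  -- assemble
  set K : ℝ := (-6160 * (d 1 * d 1 * d 1 * d 1 * d 1))
    + (13200 * (d 0 * d 1 * d 1 * d 1 * d 2))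
    + (-5400 * (d 0 * d 0 * d 1 * d 2 * d 2))
    + (-3600 * (d 0 * d 0 * d 1 * d 1 * d 3))
    + (1350 * (d 0 * d 0 * d 0 * d 2 * d 3))
    + (675 * (d 0 * d 0 * d 0 * d 1 * d 4))
    + (-81 * (d 0 * d 0 * d 0 * d 0 * d 5)) with hK
  have hsum := ((((((hT1.add hT2).add hT3).add hT4).add hT5).add hT6).add hT7)
  have hKo : (fun t => (-K) * (t - t0) ^ (5*m)) =o[𝓝 t0] fun t => (t - t0) ^ (5*m) := by
    refine hsum.congr' ?_ EventuallyEq.rfl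
    filter_upwards with t
    have h := hode' t
    simp only [hK]
    linear_combination h
  have hK0 : K = 0 := by
    have := const_eq_zero_of_littleO hKo
    linarith
  -- final arithmetic
  have hK0' : (-6160 * (d 1 * d 1 * d 1 * d 1 * d 1))
      + (13200 * (d 0 * d 1 * d 1 * d 1 * d 2))
      + (-5400 * (d 0 * d 0 * d 1 * d 2 * d 2))
      + (-3600 * (d 0 * d 0 * d 1 * d 1 * d 3))
      + (1350 * (d 0 * d 0 * d 0 * d 2 * d 3))
      + (675 * (d 0 * d 0 * d 0 * d 1 * d 4))
      + (-81 * (d 0 * d 0 * d 0 * d 0 * d 5)) = 0 := by rw [← hK]; exact hK0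
  simp only [hd] at hK0'
  have hQneg := Qneg m
  exact final_alg c _ _ _ _ _ _ ((m+1).factorial : ℝ) (ne_of_gt hfacpos) hQneg hK0'
end

section
/- Fix m ∈ (0,1) and ℓ > 0 and let κ(s) = (3/2)ℓ²((m+1)/3 − m·sn²(ℓs, m)), where sn(·,m) is the Jacobi elliptic sine with parameter m (square of the modulus). Then κ satisfies κ''' + 8κκ' = 0, and moreover κ'' + 4κ² = (3/8)m₂ and (κ')² + (8/3)κ³ − (3/4)m₂κ + 9(1+m₃/8) = 0, with m₂ = (8/3)(1−m+m²)ℓ⁴ and m₃ = (8/27)(ℓ⁶(2m³−3m²−3m+2) − 27). -/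
/-- For any function sn satisfying the Jacobi elliptic sine ODEs with parameter m
((sn')² = (1−sn²)(1−m·sn²), sn'' = −(1+m)sn + 2m·sn³, sn(0)=0), the function
κ(s) = (3/2)ℓ²((m+1)/3 − m·sn²(ℓs)) satisfies κ''' + 8κκ' = 0 together with the
stated first integrals with m₂ = (8/3)(1−m+m²)ℓ⁴, m₃ = (8/27)(ℓ⁶(2m³−3m²−3m+2)−27). -/
theorem stmt9 (m l : ℝ) (hm : m ∈ Set.Ioo (0:ℝ) 1) (hl : 0 < l)
    (sn : ℝ → ℝ) (hsn : ContDiff ℝ (⊤ : ℕ∞) sn)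
    (hsn0 : sn 0 = 0)
    (hode1 : ∀ u, (deriv sn u)^2 = (1 - (sn u)^2) * (1 - m * (sn u)^2))
    (hode2 : ∀ u, iteratedDeriv 2 sn u = -(1+m) * sn u + 2*m*(sn u)^3) :
    (∀ s, iteratedDeriv 3 (fun s => (3/2) * l^2 * ((m+1)/3 - m * (sn (l*s))^2)) s
        + 8 * ((3/2) * l^2 * ((m+1)/3 - m * (sn (l*s))^2))
            * deriv (fun s => (3/2) * l^2 * ((m+1)/3 - m * (sn (l*s))^2)) s = 0) ∧
    (∀ s, iteratedDeriv 2 (fun s => (3/2) * l^2 * ((m+1)/3 - m * (sn (l*s))^2)) s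
        + 4 * ((3/2) * l^2 * ((m+1)/3 - m * (sn (l*s))^2))^2
        = (3/8) * ((8/3)*(1-m+m^2)*l^4)) ∧
    (∀ s, (deriv (fun s => (3/2) * l^2 * ((m+1)/3 - m * (sn (l*s))^2)) s)^2
        + (8/3) * ((3/2) * l^2 * ((m+1)/3 - m * (sn (l*s))^2))^3
        - (3/4) * ((8/3)*(1-m+m^2)*l^4) * ((3/2) * l^2 * ((m+1)/3 - m * (sn (l*s))^2))
        + 9 * (1 + ((8/27)*(l^6*(2*m^3-3*m^2-3*m+2) - 27))/8) = 0) := by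
  have hsd : Differentiable ℝ sn := hsn.differentiable (by simp)
  have hsd2 : ContDiff ℝ (⊤:ℕ∞) (deriv sn) := (contDiff_infty_iff_deriv.mp hsn).2
  have hsd2' : Differentiable ℝ (deriv sn) := hsd2.differentiable (by simp)
  have hode2' : ∀ u, deriv (deriv sn) u = -(1+m) * sn u + 2*m*(sn u)^3 := by
    intro u
    have h := hode2 u
    rwa [iteratedDeriv_succ, iteratedDeriv_one] at h
  have hlin : ∀ s : ℝ, HasDerivAt (fun x : ℝ => l * x) l s := by
    intro s; simpa using (hasDerivAt_id s).const_mul l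
  have hinner : ∀ s : ℝ, HasDerivAt (fun s => sn (l*s)) (deriv sn (l*s) * l) s :=
    fun s => (hsd (l*s)).hasDerivAt.comp s (hlin s)
  have hinner' : ∀ s : ℝ, HasDerivAt (fun s => deriv sn (l*s))
      ((-(1+m) * sn (l*s) + 2*m*(sn (l*s))^3) * l) s := by
    intro s
    have h := (hsd2' (l*s)).hasDerivAt.comp s (hlin s)
    rwa [hode2'] at h
  set κ : ℝ → ℝ := fun s => (3/2) * l^2 * ((m+1)/3 - m * (sn (l*s))^2) with hκdef
  -- first derivative
  have hK1 : ∀ s, HasDerivAt κ (-3*l^3*m*(sn (l*s) * deriv sn (l*s))) s := by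
    intro s
    have h := (((hinner s).pow 2).const_mul m).const_sub ((m+1)/3)
    have h2 := h.const_mul ((3/2) * l^2)
    refine h2.congr_deriv ?_
    norm_num
    ring
  have hdκ : deriv κ = fun s => -3*l^3*m*(sn (l*s) * deriv sn (l*s)) :=
    funext fun s => (hK1 s).deriv
  -- second derivative
  have hK2 : ∀ s, HasDerivAt (fun s => -3*l^3*m*(sn (l*s) * deriv sn (l*s)))
      (-3*l^4*m*((deriv sn (l*s))^2
        + sn (l*s) * (-(1+m) * sn (l*s) + 2*m*(sn (l*s))^3))) s := by
    intro s
    have h := ((hinner s).mul (hinner' s)).const_mul (-3*l^3*m)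
    refine h.congr_deriv ?_
    ring
  have hd2κ : deriv (deriv κ) = fun s =>
      -3*l^4*m*(1 - 2*(1+m)*(sn (l*s))^2 + 3*m*(sn (l*s))^4) := by
    funext s
    rw [hdκ, (hK2 s).deriv]
    linear_combination (-3*l^4*m) * hode1 (l*s)
  -- third derivative
  have hK3 : ∀ s, HasDerivAt (fun s => -3*l^4*m*(1 - 2*(1+m)*(sn (l*s))^2 + 3*m*(sn (l*s))^4))
      (-3*l^5*m*(sn (l*s) * deriv sn (l*s)) * (-4*(1+m) + 12*m*(sn (l*s))^2)) s := by
    intro s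
    have hx2 := (hinner s).pow 2
    have hx4 := (hinner s).pow 4
    have h := (((hx2.const_mul (2*(1+m))).const_sub 1).add (hx4.const_mul (3*m))).const_mul
      (-3*l^4*m)
    refine h.congr_deriv ?_
    norm_num
    ring
  have hit2 : ∀ s, iteratedDeriv 2 κ s
      = -3*l^4*m*(1 - 2*(1+m)*(sn (l*s))^2 + 3*m*(sn (l*s))^4) := by
    intro s
    rw [iteratedDeriv_succ, iteratedDeriv_one, hd2κ]
  have hit3 : ∀ s, iteratedDeriv 3 κ s
      = -3*l^5*m*(sn (l*s) * deriv sn (l*s)) * (-4*(1+m) + 12*m*(sn (l*s))^2) := by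
    intro s
    rw [iteratedDeriv_succ, iteratedDeriv_succ, iteratedDeriv_one,
      hd2κ, (hK3 s).deriv]
  refine ⟨fun s => ?_, fun s => ?_, fun s => ?_⟩
  · rw [hit3 s, hdκ]
    ring
  · rw [hit2 s]
    ring
  · rw [hdκ]
    simp only
    linear_combination (9*l^6*m^2*(sn (l*s))^2) * hode1 (l*s)
end

section
/- For every m ∈ (0,1), the quantity 3E(m)² + (1−m)K(m)² + 2(m−2)E(m)K(m) is strictly negative, where K and E are the complete elliptic integrals of the first and second kind with parameter m. -/
open Real

/-- Complete elliptic integral of the first kind with parameter m (square of the modulus). -/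
noncomputable def Kel (m : ℝ) : ℝ :=
  ∫ θ in (0:ℝ)..(Real.pi/2), 1 / Real.sqrt (1 - m * Real.sin θ ^ 2)

/-- Complete elliptic integral of the second kind with parameter m. -/
noncomputable def Eel (m : ℝ) : ℝ :=
  ∫ θ in (0:ℝ)..(Real.pi/2), Real.sqrt (1 - m * Real.sin θ ^ 2)

open MeasureTheory intervalIntegral Metric

lemma aux_pos {x : ℝ} (hx : |x| < 1) (θ : ℝ) : 0 < 1 - x * Real.sin θ ^ 2 := by
  have h1 : Real.sin θ ^ 2 ≤ 1 := Real.sin_sq_le_one θ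
  have h0 : (0:ℝ) ≤ Real.sin θ ^ 2 := sq_nonneg _
  have := le_abs_self x
  have := abs_nonneg x
  nlinarith

lemma hasDerivAt_E_integrand {x : ℝ} (hx : |x| < 1) (θ : ℝ) :
    HasDerivAt (fun y : ℝ => Real.sqrt (1 - y * Real.sin θ ^ 2))
      (-(Real.sin θ ^ 2 / (2 * Real.sqrt (1 - x * Real.sin θ ^ 2)))) x := by
  have hu : HasDerivAt (fun y : ℝ => 1 - y * Real.sin θ ^ 2) (-(Real.sin θ ^ 2)) x := by
    simpa using ((hasDerivAt_id x).mul_const (Real.sin θ ^ 2)).const_sub 1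
  have h := (Real.hasDerivAt_sqrt (ne_of_gt (aux_pos hx θ))).comp x hu
  refine h.congr_deriv (Eq.symm ?_)
  field_simp

lemma hasDerivAt_K_integrand {x : ℝ} (hx : |x| < 1) (θ : ℝ) :
    HasDerivAt (fun y : ℝ => 1 / Real.sqrt (1 - y * Real.sin θ ^ 2))
      (Real.sin θ ^ 2 / (2 * (1 - x * Real.sin θ ^ 2) * Real.sqrt (1 - x * Real.sin θ ^ 2))) x := by
  have hs : 0 < Real.sqrt (1 - x * Real.sin θ ^ 2) := Real.sqrt_pos.2 (aux_pos hx θ)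
  have h := ((hasDerivAt_E_integrand hx θ).inv (ne_of_gt hs))
  have h2 : Real.sqrt (1 - x * Real.sin θ ^ 2) ^ 2 = 1 - x * Real.sin θ ^ 2 :=
    Real.sq_sqrt (aux_pos hx θ).le
  simp only [one_div]
  refine h.congr_deriv (Eq.symm ?_)
  rw [h2, neg_neg, div_div]
  ring_nf

lemma ball_abs {m x : ℝ} (hx : x ∈ ball m ((1 - |m|)/2)) :
    |x| < (1 + |m|)/2 := by
  have := abs_sub_abs_le_abs_sub x m
  have h2 : |x - m| < (1 - |m|)/2 := by simpa [Real.dist_eq] using hx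
  linarith

lemma u_lower {x : ℝ} {c : ℝ} (hx : |x| ≤ c) (θ : ℝ) :
    1 - c ≤ 1 - x * Real.sin θ ^ 2 := by
  have h1 : Real.sin θ ^ 2 ≤ 1 := Real.sin_sq_le_one θ
  have h0 : (0:ℝ) ≤ Real.sin θ ^ 2 := sq_nonneg _
  have := le_abs_self x
  nlinarith [abs_nonneg x]

lemma cont_u (x : ℝ) : Continuous (fun θ : ℝ => 1 - x * Real.sin θ ^ 2) :=
  continuous_const.sub (continuous_const.mul ((Real.continuous_sin).pow 2))

lemma cont_sqrtu (x : ℝ) : Continuous (fun θ : ℝ => Real.sqrt (1 - x * Real.sin θ ^ 2)) :=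
  (continuous_const.sub (continuous_const.mul ((Real.continuous_sin).pow 2))).sqrt

set_option maxHeartbeats 1000000 in
lemma hasDerivAt_Eel {m : ℝ} (hm : |m| < 1) :
    HasDerivAt Eel
      (∫ θ in (0:ℝ)..(Real.pi/2), -(Real.sin θ ^ 2 / (2 * Real.sqrt (1 - m * Real.sin θ ^ 2)))) m := by
  set c : ℝ := (1 + |m|)/2 with hc
  have hc1 : c < 1 := by rw [hc]; linarith
  have hc0 : 0 < 1 - c := by linarith
  have hεpos : (0:ℝ) < (1 - |m|)/2 := by linarith [abs_nonneg m]
  have hsc : 0 < Real.sqrt (1 - c) := Real.sqrt_pos.2 hc0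
  have hF_meas : ∀ᶠ x in nhds m, AEStronglyMeasurable
      (fun θ : ℝ => Real.sqrt (1 - x * Real.sin θ ^ 2)) (volume.restrict (Set.uIoc 0 (Real.pi/2))) :=
    Filter.Eventually.of_forall fun x => ((cont_sqrtu x).aestronglyMeasurable).restrict
  have hF_int : IntervalIntegrable (fun θ : ℝ => Real.sqrt (1 - m * Real.sin θ ^ 2))
      volume 0 (Real.pi/2) := (cont_sqrtu m).intervalIntegrable _ _
  have hF'_meas : AEStronglyMeasurable
      (fun θ : ℝ => -(Real.sin θ ^ 2 / (2 * Real.sqrt (1 - m * Real.sin θ ^ 2))))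
      (volume.restrict (Set.uIoc 0 (Real.pi/2))) := by
    refine (Continuous.aestronglyMeasurable ?_).restrict
    exact ((Real.continuous_sin.pow 2).div (continuous_const.mul (cont_sqrtu m))
      (fun θ => mul_ne_zero two_ne_zero (Real.sqrt_pos.2 (aux_pos hm θ)).ne')).neg
  have h_bound : ∀ᵐ θ ∂(volume : Measure ℝ), θ ∈ Set.uIoc 0 (Real.pi/2) →
      ∀ x ∈ ball m ((1 - |m|)/2),
        ‖-(Real.sin θ ^ 2 / (2 * Real.sqrt (1 - x * Real.sin θ ^ 2)))‖ ≤ 1 / (2 * Real.sqrt (1 - c)) := by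
    refine Filter.Eventually.of_forall fun θ _ x hx => ?_
    have hxc : |x| < c := ball_abs hx
    have hu : 1 - c ≤ 1 - x * Real.sin θ ^ 2 := u_lower hxc.le θ
    have hs : Real.sqrt (1 - c) ≤ Real.sqrt (1 - x * Real.sin θ ^ 2) := Real.sqrt_le_sqrt hu
    rw [norm_neg, Real.norm_eq_abs, abs_of_nonneg (by positivity)]
    gcongr
    exact Real.sin_sq_le_one θ
  have h_diff : ∀ᵐ θ ∂(volume : Measure ℝ), θ ∈ Set.uIoc 0 (Real.pi/2) →
      ∀ x ∈ ball m ((1 - |m|)/2),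
        HasDerivAt (fun y : ℝ => Real.sqrt (1 - y * Real.sin θ ^ 2))
          (-(Real.sin θ ^ 2 / (2 * Real.sqrt (1 - x * Real.sin θ ^ 2)))) x := by
    refine Filter.Eventually.of_forall fun θ _ x hx => ?_
    exact hasDerivAt_E_integrand (lt_trans (ball_abs hx) hc1) θ
  refine (intervalIntegral.hasDerivAt_integral_of_dominated_loc_of_deriv_le (𝕜 := ℝ)
    (μ := volume) (s := ball m ((1 - |m|)/2)) (bound := fun _ => 1 / (2 * Real.sqrt (1 - c)))
    (F := fun x θ => Real.sqrt (1 - x * Real.sin θ ^ 2))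
    (F' := fun x θ => -(Real.sin θ ^ 2 / (2 * Real.sqrt (1 - x * Real.sin θ ^ 2))))
    (ball_mem_nhds m hεpos) hF_meas hF_int hF'_meas h_bound intervalIntegrable_const h_diff).2

set_option maxHeartbeats 1000000 in
lemma hasDerivAt_Kel {m : ℝ} (hm : |m| < 1) :
    HasDerivAt Kel
      (∫ θ in (0:ℝ)..(Real.pi/2),
        Real.sin θ ^ 2 / (2 * (1 - m * Real.sin θ ^ 2) * Real.sqrt (1 - m * Real.sin θ ^ 2))) m := by
  set c : ℝ := (1 + |m|)/2 with hc
  have hc1 : c < 1 := by rw [hc]; linarith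
  have hc0 : 0 < 1 - c := by linarith
  have hεpos : (0:ℝ) < (1 - |m|)/2 := by linarith [abs_nonneg m]
  have hsc : 0 < Real.sqrt (1 - c) := Real.sqrt_pos.2 hc0
  have hF_meas : ∀ᶠ x in nhds m, AEStronglyMeasurable
      (fun θ : ℝ => 1 / Real.sqrt (1 - x * Real.sin θ ^ 2))
      (volume.restrict (Set.uIoc 0 (Real.pi/2))) := by
    have : ∀ᶠ x in nhds m, |x| < 1 := by
      have : Set.Ioo (-1:ℝ) 1 ∈ nhds m := by
        refine Ioo_mem_nhds ?_ ?_ <;> [linarith [neg_abs_le m]; linarith [le_abs_self m]]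
      filter_upwards [this] with x hx
      exact abs_lt.2 ⟨hx.1, hx.2⟩
    filter_upwards [this] with x hx
    refine (Continuous.aestronglyMeasurable ?_).restrict
    exact continuous_const.div (cont_sqrtu x) (fun θ => ne_of_gt (Real.sqrt_pos.2 (aux_pos hx θ)))
  have hF_int : IntervalIntegrable (fun θ : ℝ => 1 / Real.sqrt (1 - m * Real.sin θ ^ 2))
      volume 0 (Real.pi/2) := by
    refine (Continuous.intervalIntegrable ?_ _ _)
    exact continuous_const.div (cont_sqrtu m) (fun θ => ne_of_gt (Real.sqrt_pos.2 (aux_pos hm θ)))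
  have hF'_meas : AEStronglyMeasurable
      (fun θ : ℝ => Real.sin θ ^ 2 / (2 * (1 - m * Real.sin θ ^ 2) * Real.sqrt (1 - m * Real.sin θ ^ 2)))
      (volume.restrict (Set.uIoc 0 (Real.pi/2))) := by
    refine (Continuous.aestronglyMeasurable ?_).restrict
    refine (Real.continuous_sin.pow 2).div
      ((continuous_const.mul (cont_u m)).mul (cont_sqrtu m)) (fun θ => ?_)
    have h1 := aux_pos hm θ
    have h2 := Real.sqrt_pos.2 h1
    positivity
  have h_bound : ∀ᵐ θ ∂(volume : Measure ℝ), θ ∈ Set.uIoc 0 (Real.pi/2) →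
      ∀ x ∈ ball m ((1 - |m|)/2),
        ‖Real.sin θ ^ 2 / (2 * (1 - x * Real.sin θ ^ 2) * Real.sqrt (1 - x * Real.sin θ ^ 2))‖
          ≤ 1 / (2 * (1 - c) * Real.sqrt (1 - c)) := by
    refine Filter.Eventually.of_forall fun θ _ x hx => ?_
    have hxc : |x| < c := ball_abs hx
    have hu : 1 - c ≤ 1 - x * Real.sin θ ^ 2 := u_lower hxc.le θ
    have hs : Real.sqrt (1 - c) ≤ Real.sqrt (1 - x * Real.sin θ ^ 2) := Real.sqrt_le_sqrt hu
    have hup : 0 < 1 - x * Real.sin θ ^ 2 := lt_of_lt_of_le hc0 hu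
    have hsp : 0 < Real.sqrt (1 - x * Real.sin θ ^ 2) := Real.sqrt_pos.2 hup
    rw [Real.norm_eq_abs, abs_of_nonneg (by positivity)]
    gcongr
    exact Real.sin_sq_le_one θ
  have h_diff : ∀ᵐ θ ∂(volume : Measure ℝ), θ ∈ Set.uIoc 0 (Real.pi/2) →
      ∀ x ∈ ball m ((1 - |m|)/2),
        HasDerivAt (fun y : ℝ => 1 / Real.sqrt (1 - y * Real.sin θ ^ 2))
          (Real.sin θ ^ 2 / (2 * (1 - x * Real.sin θ ^ 2) * Real.sqrt (1 - x * Real.sin θ ^ 2))) x := by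
    refine Filter.Eventually.of_forall fun θ _ x hx => ?_
    exact hasDerivAt_K_integrand (lt_trans (ball_abs hx) hc1) θ
  refine (intervalIntegral.hasDerivAt_integral_of_dominated_loc_of_deriv_le (𝕜 := ℝ)
    (μ := volume) (s := ball m ((1 - |m|)/2)) (bound := fun _ => 1 / (2 * (1 - c) * Real.sqrt (1 - c)))
    (F := fun x θ => 1 / Real.sqrt (1 - x * Real.sin θ ^ 2))
    (F' := fun x θ => Real.sin θ ^ 2 / (2 * (1 - x * Real.sin θ ^ 2) * Real.sqrt (1 - x * Real.sin θ ^ 2)))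
    (ball_mem_nhds m hεpos) hF_meas hF_int hF'_meas h_bound intervalIntegrable_const h_diff).2

-- the FTC ingredient: derivative of sin·cos/√(1 - m sin²)
lemma hasDerivAt_F {m : ℝ} (hm : |m| < 1) (θ : ℝ) :
    HasDerivAt (fun t : ℝ => Real.sin t * Real.cos t / Real.sqrt (1 - m * Real.sin t ^ 2))
      ((1 - 2 * Real.sin θ ^ 2 + m * Real.sin θ ^ 4) /
        ((1 - m * Real.sin θ ^ 2) * Real.sqrt (1 - m * Real.sin θ ^ 2))) θ := by
  have hpos := aux_pos hm θ
  have hr : 0 < Real.sqrt (1 - m * Real.sin θ ^ 2) := Real.sqrt_pos.2 hpos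
  have h1 : HasDerivAt (fun t : ℝ => Real.sin t * Real.cos t)
      (Real.cos θ * Real.cos θ + Real.sin θ * -Real.sin θ) θ :=
    (Real.hasDerivAt_sin θ).mul (Real.hasDerivAt_cos θ)
  have hu : HasDerivAt (fun t : ℝ => 1 - m * Real.sin t ^ 2)
      (-(m * (2 * Real.sin θ ^ 1 * Real.cos θ))) θ :=
    (((Real.hasDerivAt_sin θ).pow 2).const_mul m).const_sub 1
  have h2 := (Real.hasDerivAt_sqrt (ne_of_gt hpos)).comp θ hu
  have h3 := h1.div h2 (ne_of_gt hr)
  refine h3.congr_deriv (Eq.symm ?_)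
  have hu2 : Real.sqrt (1 - m * Real.sin θ ^ 2) ^ 2 = 1 - m * Real.sin θ ^ 2 :=
    Real.sq_sqrt hpos.le
  have hc : Real.cos θ ^ 2 = 1 - Real.sin θ ^ 2 := Real.cos_sq' θ
  simp only [Function.comp_apply]
  have hu' : 0 < 1 - Real.sin θ ^ 2 * m := by linarith [mul_comm m (Real.sin θ ^ 2)]
  have hr' := Real.sqrt_pos.2 hu'
  field_simp
  have hu2' : Real.sqrt (1 - Real.sin θ ^ 2 * m) ^ 2 = 1 - Real.sin θ ^ 2 * m := Real.sq_sqrt hu'.le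
  linear_combination ((1 - 2 * Real.sin θ ^ 2 + m * Real.sin θ ^ 4)
      - (1 - m * Real.sin θ ^ 2) * (Real.cos θ ^ 2 - Real.sin θ ^ 2)) * hu2'
    - (1 - m * Real.sin θ ^ 2) * hc

lemma cont_div_sqrtu {m : ℝ} (hm : |m| < 1) {g : ℝ → ℝ} (hg : Continuous g) :
    Continuous (fun θ : ℝ => g θ / Real.sqrt (1 - m * Real.sin θ ^ 2)) :=
  hg.div (cont_sqrtu m) (fun θ => ne_of_gt (Real.sqrt_pos.2 (aux_pos hm θ)))

lemma cont_div_u32 {m : ℝ} (hm : |m| < 1) {g : ℝ → ℝ} (hg : Continuous g) :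
    Continuous (fun θ : ℝ =>
      g θ / ((1 - m * Real.sin θ ^ 2) * Real.sqrt (1 - m * Real.sin θ ^ 2))) := by
  refine hg.div ((cont_u m).mul (cont_sqrtu m)) (fun θ => ?_)
  have h1 := aux_pos hm θ
  have h2 := Real.sqrt_pos.2 h1
  positivity

-- FTC: ∫ (1 - 2 sin² + m sin⁴)/(u √u) = 0
lemma integral_F_deriv {m : ℝ} (hm : |m| < 1) :
    (∫ θ in (0:ℝ)..(Real.pi/2), (1 - 2 * Real.sin θ ^ 2 + m * Real.sin θ ^ 4) /
      ((1 - m * Real.sin θ ^ 2) * Real.sqrt (1 - m * Real.sin θ ^ 2))) = 0 := by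
  have h := intervalIntegral.integral_eq_sub_of_hasDerivAt (a := (0:ℝ)) (b := Real.pi/2)
    (f := fun t : ℝ => Real.sin t * Real.cos t / Real.sqrt (1 - m * Real.sin t ^ 2))
    (fun θ _ => hasDerivAt_F hm θ)
    ((cont_div_u32 hm (by continuity)).intervalIntegrable _ _)
  rw [h]
  simp

-- identity: K - E = m ∫ sin²/√u
lemma idKE {m : ℝ} (hm : |m| < 1) :
    Kel m - Eel m
      = m * ∫ θ in (0:ℝ)..(Real.pi/2), Real.sin θ ^ 2 / Real.sqrt (1 - m * Real.sin θ ^ 2) := by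
  rw [Kel, Eel, ← intervalIntegral.integral_sub
      ((cont_div_sqrtu hm continuous_const).intervalIntegrable _ _)
      ((cont_sqrtu m).intervalIntegrable _ _),
    ← intervalIntegral.integral_const_mul]
  refine intervalIntegral.integral_congr fun θ _ => ?_
  have hpos := aux_pos hm θ
  have hr : 0 < Real.sqrt (1 - m * Real.sin θ ^ 2) := Real.sqrt_pos.2 hpos
  have hu2 : Real.sqrt (1 - m * Real.sin θ ^ 2) ^ 2 = 1 - m * Real.sin θ ^ 2 :=
    Real.sq_sqrt hpos.le
  field_simp
  rw [hu2]; ring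

-- identity: J - K = m ∫ sin²/(u√u)
lemma idJK {m : ℝ} (hm : |m| < 1) :
    (∫ θ in (0:ℝ)..(Real.pi/2),
        1 / ((1 - m * Real.sin θ ^ 2) * Real.sqrt (1 - m * Real.sin θ ^ 2))) - Kel m
      = m * ∫ θ in (0:ℝ)..(Real.pi/2),
          Real.sin θ ^ 2 / ((1 - m * Real.sin θ ^ 2) * Real.sqrt (1 - m * Real.sin θ ^ 2)) := by
  rw [Kel, ← intervalIntegral.integral_sub
      ((cont_div_u32 hm continuous_const).intervalIntegrable _ _)
      ((cont_div_sqrtu hm continuous_const).intervalIntegrable _ _),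
    ← intervalIntegral.integral_const_mul]
  refine intervalIntegral.integral_congr fun θ _ => ?_
  have hpos := aux_pos hm θ
  have hr : 0 < Real.sqrt (1 - m * Real.sin θ ^ 2) := Real.sqrt_pos.2 hpos
  have hu2 : Real.sqrt (1 - m * Real.sin θ ^ 2) ^ 2 = 1 - m * Real.sin θ ^ 2 :=
    Real.sq_sqrt hpos.le
  field_simp
  ring

-- identity: E = (1-m) J
lemma idEJ {m : ℝ} (hm : |m| < 1) :
    Eel m = (1 - m) * ∫ θ in (0:ℝ)..(Real.pi/2),
      1 / ((1 - m * Real.sin θ ^ 2) * Real.sqrt (1 - m * Real.sin θ ^ 2)) := by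
  have h0 := integral_F_deriv hm
  have key : Eel m - (1 - m) * (∫ θ in (0:ℝ)..(Real.pi/2),
      1 / ((1 - m * Real.sin θ ^ 2) * Real.sqrt (1 - m * Real.sin θ ^ 2)))
      = m * ∫ θ in (0:ℝ)..(Real.pi/2), (1 - 2 * Real.sin θ ^ 2 + m * Real.sin θ ^ 4) /
          ((1 - m * Real.sin θ ^ 2) * Real.sqrt (1 - m * Real.sin θ ^ 2)) := by
    rw [Eel, ← intervalIntegral.integral_const_mul, ← intervalIntegral.integral_const_mul,
      ← intervalIntegral.integral_sub
        (g := fun x => (1 - m) * (1 / ((1 - m * Real.sin x ^ 2) * Real.sqrt (1 - m * Real.sin x ^ 2))))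
        ((cont_sqrtu m).intervalIntegrable _ _)
        ((continuous_const.mul (cont_div_u32 hm continuous_const)).intervalIntegrable _ _)]
    refine intervalIntegral.integral_congr fun θ _ => ?_
    have hpos := aux_pos hm θ
    have hr : 0 < Real.sqrt (1 - m * Real.sin θ ^ 2) := Real.sqrt_pos.2 hpos
    have hu2 : Real.sqrt (1 - m * Real.sin θ ^ 2) ^ 2 = 1 - m * Real.sin θ ^ 2 :=
      Real.sq_sqrt hpos.le
    field_simp
    linear_combination (1 - m * Real.sin θ ^ 2) * hu2
  rw [h0, mul_zero] at key
  linarith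

-- positivity facts for m ∈ (0,1)
lemma Eel_pos {m : ℝ} (hm : |m| < 1) : 0 < Eel m := by
  rw [Eel]
  refine intervalIntegral.intervalIntegral_pos_of_pos_on
    ((cont_sqrtu m).intervalIntegrable _ _) (fun θ _ => Real.sqrt_pos.2 (aux_pos hm θ))
    (by positivity)

lemma KE_pos {m : ℝ} (hm : m ∈ Set.Ioo (0:ℝ) 1) : Eel m < Kel m := by
  have hm1 : |m| < 1 := abs_lt.2 ⟨by linarith [hm.1], hm.2⟩
  have hS : 0 < ∫ θ in (0:ℝ)..(Real.pi/2),
      Real.sin θ ^ 2 / Real.sqrt (1 - m * Real.sin θ ^ 2) := by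
    refine intervalIntegral.intervalIntegral_pos_of_pos_on
      ((cont_div_sqrtu hm1 (Real.continuous_sin.pow 2)).intervalIntegrable _ _)
      (fun θ hθ => ?_) (by positivity)
    have hs : 0 < Real.sin θ := Real.sin_pos_of_pos_of_lt_pi hθ.1 (by linarith [hθ.2, Real.pi_pos])
    have := Real.sqrt_pos.2 (aux_pos hm1 θ)
    positivity
  have := idKE hm1
  nlinarith [hm.1]

lemma EK1_pos {m : ℝ} (hm : m ∈ Set.Ioo (0:ℝ) 1) : (1 - m) * Kel m < Eel m := by
  have hm1 : |m| < 1 := abs_lt.2 ⟨by linarith [hm.1], hm.2⟩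
  have key : Eel m - (1 - m) * Kel m
      = ∫ θ in (0:ℝ)..(Real.pi/2),
          (Real.sqrt (1 - m * Real.sin θ ^ 2)
            - (1 - m) * (1 / Real.sqrt (1 - m * Real.sin θ ^ 2))) := by
    rw [Eel, Kel, ← intervalIntegral.integral_const_mul,
      ← intervalIntegral.integral_sub
        (g := fun x => (1 - m) * (1 / Real.sqrt (1 - m * Real.sin x ^ 2)))
        ((cont_sqrtu m).intervalIntegrable _ _)
        ((continuous_const.mul (cont_div_sqrtu hm1 continuous_const)).intervalIntegrable _ _)]
  have hpos : 0 < ∫ θ in (0:ℝ)..(Real.pi/2),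
      (Real.sqrt (1 - m * Real.sin θ ^ 2)
        - (1 - m) * (1 / Real.sqrt (1 - m * Real.sin θ ^ 2))) := by
    refine intervalIntegral.intervalIntegral_pos_of_pos_on ?_ (fun θ hθ => ?_) (by positivity)
    · exact ((cont_sqrtu m).sub
        (continuous_const.mul (cont_div_sqrtu hm1 continuous_const))).intervalIntegrable _ _
    · have hu := aux_pos hm1 θ
      have hr : 0 < Real.sqrt (1 - m * Real.sin θ ^ 2) := Real.sqrt_pos.2 hu
      have hu2 : Real.sqrt (1 - m * Real.sin θ ^ 2) ^ 2 = 1 - m * Real.sin θ ^ 2 :=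
        Real.sq_sqrt hu.le
      have hcos : 0 < Real.cos θ :=
        Real.cos_pos_of_mem_Ioo ⟨by linarith [hθ.1, Real.pi_pos], hθ.2⟩
      have hsin2 : Real.sin θ ^ 2 < 1 := by
        nlinarith [Real.sin_sq_add_cos_sq θ]
      have hmul : Real.sqrt (1 - m * Real.sin θ ^ 2) * Real.sqrt (1 - m * Real.sin θ ^ 2)
          = 1 - m * Real.sin θ ^ 2 := Real.mul_self_sqrt hu.le
      rw [sub_pos, mul_one_div, div_lt_iff₀ hr]
      nlinarith [hm.1]
  linarith

lemma hasDerivAt_Eel' {m : ℝ} (hm : m ∈ Set.Ioo (0:ℝ) 1) :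
    HasDerivAt Eel ((Eel m - Kel m) / (2 * m)) m := by
  have hm1 : |m| < 1 := abs_lt.2 ⟨by linarith [hm.1], hm.2⟩
  have h := hasDerivAt_Eel hm1
  have h2 : (∫ θ in (0:ℝ)..(Real.pi/2),
        -(Real.sin θ ^ 2 / (2 * Real.sqrt (1 - m * Real.sin θ ^ 2))))
      = (-(1:ℝ)/2) * ∫ θ in (0:ℝ)..(Real.pi/2),
          Real.sin θ ^ 2 / Real.sqrt (1 - m * Real.sin θ ^ 2) := by
    rw [← intervalIntegral.integral_const_mul]
    refine intervalIntegral.integral_congr fun θ _ => ?_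
    have hr : 0 < Real.sqrt (1 - m * Real.sin θ ^ 2) := Real.sqrt_pos.2 (aux_pos hm1 θ)
    field_simp
  have h3 := idKE hm1
  have hm0 : m ≠ 0 := ne_of_gt hm.1
  rw [h2] at h
  convert h using 1
  rw [div_eq_iff (by positivity : (2:ℝ)*m ≠ 0)]
  linear_combination -h3

lemma hasDerivAt_Kel' {m : ℝ} (hm : m ∈ Set.Ioo (0:ℝ) 1) :
    HasDerivAt Kel ((Eel m - (1 - m) * Kel m) / (2 * m * (1 - m))) m := by
  have hm1 : |m| < 1 := abs_lt.2 ⟨by linarith [hm.1], hm.2⟩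
  have h := hasDerivAt_Kel hm1
  have h2 : (∫ θ in (0:ℝ)..(Real.pi/2),
        Real.sin θ ^ 2 / (2 * (1 - m * Real.sin θ ^ 2) * Real.sqrt (1 - m * Real.sin θ ^ 2)))
      = ((1:ℝ)/2) * ∫ θ in (0:ℝ)..(Real.pi/2),
          Real.sin θ ^ 2 / ((1 - m * Real.sin θ ^ 2) * Real.sqrt (1 - m * Real.sin θ ^ 2)) := by
    rw [← intervalIntegral.integral_const_mul]
    refine intervalIntegral.integral_congr fun θ _ => ?_
    rw [mul_assoc, div_mul_eq_div_div_swap, one_div, inv_mul_eq_div]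
  have h3 := idJK hm1
  have h4 := idEJ hm1
  have hm0 : m ≠ 0 := ne_of_gt hm.1
  have hm2 : (1:ℝ) - m ≠ 0 := ne_of_gt (by linarith [hm.2])
  rw [h2] at h
  convert h using 1
  have h5 : (0:ℝ) < 1 - m := by linarith [hm.2]
  have hden : (2:ℝ) * m * (1 - m) ≠ 0 := by positivity
  rw [div_eq_iff hden]
  linear_combination (1-m)*h3 + h4

theorem stmt11_aux (m : ℝ) (hm : m ∈ Set.Ioo (0:ℝ) 1) :
    3 * Eel m ^ 2 + (1 - m) * Kel m ^ 2 + 2 * (m - 2) * Eel m * Kel m < 0 := by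
  set F : ℝ → ℝ := fun x => 3 * Eel x ^ 2 + (1 - x) * Kel x ^ 2 + 2 * (x - 2) * Eel x * Kel x
    with hF
  have habs : ∀ x ∈ Set.Icc (0:ℝ) m, |x| < 1 := fun x hx =>
    abs_lt.2 ⟨by linarith [hx.1], by linarith [hx.2, hm.2]⟩
  have hcont : ContinuousOn F (Set.Icc 0 m) := by
    intro x hx
    have hx1 := habs x hx
    have h1 : ContinuousAt Eel x := (hasDerivAt_Eel hx1).continuousAt
    have h2 : ContinuousAt Kel x := (hasDerivAt_Kel hx1).continuousAt
    have hc : ContinuousAt F x := by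
      rw [hF]
      exact (((continuousAt_const.mul (h1.pow 2)).add
        ((continuousAt_const.sub continuousAt_id).mul (h2.pow 2))).add
          ((((continuousAt_const.mul (continuousAt_id.sub continuousAt_const))).mul h1).mul h2))
    exact hc.continuousWithinAt
  have hderiv : ∀ x ∈ Set.Ioo (0:ℝ) m, deriv F x < 0 := by
    intro x hx
    have hx' : x ∈ Set.Ioo (0:ℝ) 1 := ⟨hx.1, lt_trans hx.2 hm.2⟩
    have hE' := hasDerivAt_Eel' hx'
    have hK' := hasDerivAt_Kel' hx'
    have hL : HasDerivAt F
        (3 * (2 * Eel x ^ 1 * ((Eel x - Kel x) / (2 * x))) +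
          ((-1) * Kel x ^ 2 +
            (1 - x) * (2 * Kel x ^ 1 * ((Eel x - (1 - x) * Kel x) / (2 * x * (1 - x))))) +
          ((2 * 1 * Eel x + 2 * (x - 2) * ((Eel x - Kel x) / (2 * x))) * Kel x +
            2 * (x - 2) * Eel x * ((Eel x - (1 - x) * Kel x) / (2 * x * (1 - x))))) x := by
      have t1 := (hE'.pow 2).const_mul (3:ℝ)
      have t2 := ((hasDerivAt_id x).const_sub (1:ℝ)).mul (hK'.pow 2)
      have t3 := ((((hasDerivAt_id x).sub_const (2:ℝ)).const_mul (2:ℝ)).mul hE').mul hK'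
      exact (t1.add t2).add t3
    rw [hL.deriv]
    have hx0 : (0:ℝ) < x := hx'.1
    have hx1 : x < 1 := hx'.2
    have hKE := KE_pos hx'
    have hEK1 := EK1_pos hx'
    have hEpos := Eel_pos (habs x ⟨hx.1.le, hx.2.le⟩)
    have hEq : 3 * (2 * Eel x ^ 1 * ((Eel x - Kel x) / (2 * x))) +
          ((-1) * Kel x ^ 2 +
            (1 - x) * (2 * Kel x ^ 1 * ((Eel x - (1 - x) * Kel x) / (2 * x * (1 - x))))) +
          ((2 * 1 * Eel x + 2 * (x - 2) * ((Eel x - Kel x) / (2 * x))) * Kel x +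
            2 * (x - 2) * Eel x * ((Eel x - (1 - x) * Kel x) / (2 * x * (1 - x))))
        = ((1 - x) ^ 2 * (Kel x - Eel x) ^ 2 - x ^ 2 * Eel x ^ 2) / (x * (1 - x)) := by
      have hxne : x ≠ 0 := ne_of_gt hx0
      have h1xne : (1:ℝ) - x ≠ 0 := ne_of_gt (by linarith)
      field_simp
      ring
    rw [hEq]
    apply div_neg_of_neg_of_pos _ (by nlinarith)
    have h1 : (1 - x) * (Kel x - Eel x) < x * Eel x := by nlinarith
    have h2 : 0 ≤ (1 - x) * (Kel x - Eel x) := by nlinarith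
    nlinarith [h1, h2]
  have hanti : StrictAntiOn F (Set.Icc 0 m) :=
    strictAntiOn_of_deriv_neg (convex_Icc _ _) hcont
      (by rw [interior_Icc]; exact hderiv)
  have hlt := hanti (Set.left_mem_Icc.2 hm.1.le) (Set.right_mem_Icc.2 hm.1.le) hm.1
  have h0 : F 0 = 0 := by
    have hE0 : Eel 0 = Real.pi / 2 := by rw [Eel]; simp
    have hK0 : Kel 0 = Real.pi / 2 := by rw [Kel]; simp
    rw [hF]
    simp only [hE0, hK0]
    ring
  rw [h0] at hlt
  exact hlt

/-- For every m ∈ (0,1), 3E(m)² + (1−m)K(m)² + 2(m−2)E(m)K(m) < 0. -/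
theorem stmt11 (m : ℝ) (hm : m ∈ Set.Ioo (0:ℝ) 1) :
    3 * Eel m ^ 2 + (1 - m) * Kel m ^ 2 + 2 * (m - 2) * Eel m * Kel m < 0 := by
  exact stmt11_aux m hm
end

section
/- Let λ be a root of the characteristic polynomial of the matrix K_c = (E¹₂ + E³₁ + iE²₃) − c(E²₁ − iE³₂) (a traceless 3×3 complex matrix depending on the real parameter c). Then K_c has three distinct purely imaginary eigenvalues if and only if c > 3/(2·4^{1/3}). -/
open Complex

/-- The matrix K_c = (E¹₂ + E³₁ + iE²₃) − c(E²₁ − iE³₂):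
(1,2) entry 1, (3,1) entry 1, (2,3) entry i, (2,1) entry −c, (3,2) entry ic. -/
noncomputable def Kc (c : ℝ) : Matrix (Fin 3) (Fin 3) ℂ :=
  !![0, 1, 0; -(c:ℂ), 0, Complex.I; 1, Complex.I * (c:ℂ), 0]

open Polynomial Matrix in
lemma Kc_charpoly (c : ℝ) : (Kc c).charpoly = X^3 + C (2*c : ℂ) * X - C Complex.I := by
  rw [Matrix.charpoly, Matrix.det_fin_three]
  have h : (C Complex.I : ℂ[X])^2 = -1 := by rw [← C_pow, I_sq]; simp
  have h2 : (C (2:ℂ) : ℂ[X]) = 2 := by simp [map_ofNat]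
  simp [charmatrix_apply, Kc]
  linear_combination (-(X*C (c:ℂ)))*h + (-(X*C (c:ℂ)))*h2

lemma Kc_isRoot_iff (c : ℝ) (z : ℂ) :
    (Kc c).charpoly.IsRoot z ↔ z^3 + 2*(c:ℂ)*z - Complex.I = 0 := by
  rw [Kc_charpoly]
  simp [Polynomial.IsRoot]

/-- Vieta relations for three distinct roots of `μ³ - 2cμ + 1`. -/
lemma vieta (c μ1 μ2 μ3 : ℝ) (h12 : μ1 ≠ μ2) (h13 : μ1 ≠ μ3) (h23 : μ2 ≠ μ3)
    (hq1 : μ1^3 - 2*c*μ1 + 1 = 0) (hq2 : μ2^3 - 2*c*μ2 + 1 = 0)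
    (hq3 : μ3^3 - 2*c*μ3 + 1 = 0) :
    μ1 + μ2 + μ3 = 0 ∧ μ1*μ2 + μ1*μ3 + μ2*μ3 = -(2*c) ∧ μ1*μ2*μ3 = -1 := by
  have hA0 : (μ1 - μ2) * (μ1^2 + μ1*μ2 + μ2^2 - 2*c) = 0 := by linear_combination hq1 - hq2
  have hA : μ1^2 + μ1*μ2 + μ2^2 = 2*c := by
    have h := (mul_eq_zero.mp hA0).resolve_left (sub_ne_zero.mpr h12)
    linarith [h]
  have hB0 : (μ1 - μ3) * (μ1^2 + μ1*μ3 + μ3^2 - 2*c) = 0 := by linear_combination hq1 - hq3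
  have hB : μ1^2 + μ1*μ3 + μ3^2 = 2*c := by
    have h := (mul_eq_zero.mp hB0).resolve_left (sub_ne_zero.mpr h13)
    linarith [h]
  have he10 : (μ2 - μ3) * (μ1 + μ2 + μ3) = 0 := by linear_combination hA - hB
  have he1 : μ1 + μ2 + μ3 = 0 :=
    (mul_eq_zero.mp he10).resolve_left (sub_ne_zero.mpr h23)
  refine ⟨he1, ?_, ?_⟩
  · linear_combination (μ1 + μ2) * he1 - hA
  · linear_combination hq1 - μ1 * hA + (μ1*μ2) * he1

/-- K_c has three distinct purely imaginary eigenvalues iff c > 3/(2·∛4). -/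
theorem stmt15 (c : ℝ) :
    (∃ μ1 μ2 μ3 : ℝ, μ1 ≠ μ2 ∧ μ1 ≠ μ3 ∧ μ2 ≠ μ3 ∧
      ∀ z : ℂ, (Kc c).charpoly.IsRoot z ↔
        (z = Complex.I * μ1 ∨ z = Complex.I * μ2 ∨ z = Complex.I * μ3)) ↔
    3 / (2 * (4:ℝ) ^ ((1:ℝ)/3)) < c := by
  set t : ℝ := (4:ℝ) ^ ((1:ℝ)/3) with htdef
  have ht : 0 < t := Real.rpow_pos_of_pos (by norm_num) _
  have ht3 : t ^ 3 = 4 := by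
    rw [htdef, ← Real.rpow_natCast ((4:ℝ) ^ ((1:ℝ)/3)) 3,
      ← Real.rpow_mul (by norm_num : (0:ℝ) ≤ 4)]
    norm_num
  constructor
  · rintro ⟨μ1, μ2, μ3, h12, h13, h23, hroot⟩
    -- extract the real cubic equations
    have getq : ∀ μ : ℝ, (Kc c).charpoly.IsRoot (Complex.I * μ) →
        μ^3 - 2*c*μ + 1 = 0 := by
      intro μ hr
      have hz := (Kc_isRoot_iff c _).mp hr
      have hI : (Complex.I)^2 = -1 := Complex.I_sq
      have cq : (μ:ℂ)^3 - 2*(c:ℂ)*μ + 1 = 0 := by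
        linear_combination Complex.I * hz + (1 - 2*(μ:ℂ)*c - (μ:ℂ)^3*(Complex.I^2 - 1))*hI
      exact_mod_cast cq
    have hq1 := getq μ1 ((hroot _).mpr (Or.inl rfl))
    have hq2 := getq μ2 ((hroot _).mpr (Or.inr (Or.inl rfl)))
    have hq3 := getq μ3 ((hroot _).mpr (Or.inr (Or.inr rfl)))
    obtain ⟨he1, he2, he3⟩ := vieta c μ1 μ2 μ3 h12 h13 h23 hq1 hq2 hq3
    -- discriminant
    have hD2 : ((μ1-μ2)*(μ1-μ3)*(μ2-μ3))^2 = 32*c^3 - 27 := by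
      linear_combination ((μ1+μ2+μ3)*(μ1*μ2+μ1*μ3+μ2*μ3)^2
          - 4*(μ1+μ2+μ3)^2*(μ1*μ2*μ3)
          + 18*(μ1*μ2+μ1*μ3+μ2*μ3)*(μ1*μ2*μ3)) * he1
        + (-4*((μ1*μ2+μ1*μ3+μ2*μ3)^2 - 2*c*(μ1*μ2+μ1*μ3+μ2*μ3) + 4*c^2)) * he2
        + (-27*(μ1*μ2*μ3 - 1)) * he3
    have hDne : (μ1-μ2)*(μ1-μ3)*(μ2-μ3) ≠ 0 :=
      mul_ne_zero (mul_ne_zero (sub_ne_zero.mpr h12) (sub_ne_zero.mpr h13))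
        (sub_ne_zero.mpr h23)
    have hpos : 0 < ((μ1-μ2)*(μ1-μ3)*(μ2-μ3))^2 :=
      lt_of_le_of_ne (sq_nonneg _) (Ne.symm (pow_ne_zero 2 hDne))
    have h32 : 27 < 32*c^3 := by linarith [hD2 ▸ hpos]
    have hc0 : 0 < c := by nlinarith [h32, sq_nonneg c]
    rw [div_lt_iff₀ (by positivity)]
    by_contra h
    push_neg at h
    have hcube : (c * (2*t))^3 ≤ 3^3 := pow_le_pow_left₀ (by positivity) h 3
    have e : (c * (2*t))^3 = 8*c^3*t^3 := by ring
    rw [e, ht3] at hcube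
    linarith
  · intro hc
    have hc0 : 0 < c := lt_trans (by positivity) hc
    have hct : 3 < c * (2*t) := (div_lt_iff₀ (by positivity)).mp hc
    have ht2 : t < 2 := by
      by_contra h
      push_neg at h
      have h8 : (2:ℝ)^3 ≤ t^3 := pow_le_pow_left₀ (by norm_num) h 3
      rw [ht3] at h8
      norm_num at h8
    have hfc : Continuous (fun x : ℝ => x^3 - 2*c*x + 1) := by continuity
    -- sign values
    have ha : (-(1+2*c))^3 - 2*c*(-(1+2*c)) + 1 < 0 := by
      nlinarith [hc0, mul_pos hc0 hc0, mul_pos (mul_pos hc0 hc0) hc0]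
    have hm : (t/2)^3 - 2*c*(t/2) + 1 < 0 := by nlinarith [ht3, hct]
    have hb : (0:ℝ) < (1+2*c)^3 - 2*c*(1+2*c) + 1 := by
      nlinarith [hc0, mul_pos hc0 hc0, mul_pos (mul_pos hc0 hc0) hc0]
    obtain ⟨μ1, hμ1m, hfμ1⟩ := intermediate_value_Ioo
      (a := -(1+2*c)) (b := 0) (by linarith) hfc.continuousOn
      (Set.mem_Ioo.mpr ⟨by simpa using ha, by norm_num⟩)
    obtain ⟨μ2, hμ2m, hfμ2⟩ := intermediate_value_Ioo'
      (a := 0) (b := t/2) (by positivity) hfc.continuousOn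
      (Set.mem_Ioo.mpr ⟨by simpa using hm, by norm_num⟩)
    obtain ⟨μ3, hμ3m, hfμ3⟩ := intermediate_value_Ioo
      (a := t/2) (b := 1+2*c) (by linarith) hfc.continuousOn
      (Set.mem_Ioo.mpr ⟨by simpa using hm, by simpa using hb⟩)
    simp only at hfμ1 hfμ2 hfμ3
    obtain ⟨hμ1a, hμ1b⟩ := hμ1m
    obtain ⟨hμ2a, hμ2b⟩ := hμ2m
    obtain ⟨hμ3a, hμ3b⟩ := hμ3m
    have h12 : μ1 ≠ μ2 := ne_of_lt (by linarith)
    have h13 : μ1 ≠ μ3 := ne_of_lt (by linarith)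
    have h23 : μ2 ≠ μ3 := ne_of_lt (by linarith)
    obtain ⟨he1, he2, he3⟩ := vieta c μ1 μ2 μ3 h12 h13 h23 hfμ1 hfμ2 hfμ3
    refine ⟨μ1, μ2, μ3, h12, h13, h23, fun z => ?_⟩
    rw [Kc_isRoot_iff]
    have ce1 : (μ1:ℂ) + μ2 + μ3 = 0 := by exact_mod_cast he1
    have ce2 : (μ1:ℂ)*μ2 + (μ1:ℂ)*μ3 + (μ2:ℂ)*μ3 = -(2*(c:ℂ)) := by exact_mod_cast he2
    have ce3 : (μ1:ℂ)*μ2*μ3 = -1 := by exact_mod_cast he3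
    have hfact : z^3 + 2*(c:ℂ)*z - Complex.I
        = (z - Complex.I*μ1)*(z - Complex.I*μ2)*(z - Complex.I*μ3) := by
      have hI : (Complex.I)^2 = -1 := Complex.I_sq
      linear_combination (Complex.I*z^2)*ce1 + z*ce2 + (-Complex.I)*ce3
        + (Complex.I*((μ1:ℂ)*μ2*μ3) - ((μ1:ℂ)*μ2 + (μ1:ℂ)*μ3 + (μ2:ℂ)*μ3)*z)*hI
    constructor
    · intro hz
      rw [hfact] at hz
      rcases mul_eq_zero.mp hz with h' | h'
      · rcases mul_eq_zero.mp h' with h'' | h''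
        · exact Or.inl (by linear_combination h'')
        · exact Or.inr (Or.inl (by linear_combination h''))
      · exact Or.inr (Or.inr (by linear_combination h'))
    · rintro (rfl | rfl | rfl)
      · have cq : (μ1:ℂ)^3 - 2*(c:ℂ)*μ1 + 1 = 0 := by exact_mod_cast hfμ1
        have hI : (Complex.I)^2 = -1 := Complex.I_sq
        linear_combination (-Complex.I)*cq + ((μ1:ℂ)^3*Complex.I)*hI
      · have cq : (μ2:ℂ)^3 - 2*(c:ℂ)*μ2 + 1 = 0 := by exact_mod_cast hfμ2
        have hI : (Complex.I)^2 = -1 := Complex.I_sq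
        linear_combination (-Complex.I)*cq + ((μ2:ℂ)^3*Complex.I)*hI
      · have cq : (μ3:ℂ)^3 - 2*(c:ℂ)*μ3 + 1 = 0 := by exact_mod_cast hfμ3
        have hI : (Complex.I)^2 = -1 := Complex.I_sq
        linear_combination (-Complex.I)*cq + ((μ3:ℂ)^3*Complex.I)*hI
end
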